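/- arXiv:2210.04003 — 3 statements merged into one kernel-verified Lean document; each statement's English description precedes it below -/
import Mathlib

section
/- Let Γ be a divisible ordered abelian group, D ⊆ Γ^n, and let g, f_1,…,f_m : D → Γ be functions such that each f_i is the restriction of a Q-affine function on Γ^n and g is a w-combination of f_1,…,f_m (i.e., for every x ∈ D there is i with g(x) = f_i(x)). Suppose that for any x, y ∈ D there exists i ∈ {1,…,m} with f_i(x) ≤ g(x) and g(y) ≤ f_i(y). Then there is a collection S of subsets of {1,…,m} such that g(x) = min_{X ∈ S} max_{i ∈ X} f_i(x) for all x ∈ D. -/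
/-- `minMax S hS h f` is `min_{X ∈ S} max_{i ∈ X} f i`, for a nonempty finite
collection `S` of nonempty subsets `X ⊆ {1,…,m}`. -/
noncomputable def minMax {Γ : Type*} [LinearOrder Γ] {m : ℕ}
    (S : Finset (Finset (Fin m))) (hS : S.Nonempty) (h : ∀ X ∈ S, X.Nonempty)
    (f : Fin m → Γ) : Γ :=
  S.attach.inf' (Finset.attach_nonempty_iff.mpr hS) (fun X => X.1.sup' (h X.1 X.2) f)

/-- Let `Γ` be a divisible ordered abelian group, `D ⊆ Γ^n`, and let
`g, f_1, …, f_m : D → Γ` with each `f_i` the restriction of a ℚ-affine function and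
`g` a w-combination of the `f_i`.  If for all `x, y ∈ D` there is `i` with
`f_i(x) ≤ g(x)` and `g(y) ≤ f_i(y)`, then there is a collection `S` of subsets of
`{1,…,m}` with `g = min_{X ∈ S} max_{i ∈ X} f_i` on `D`. -/
theorem stmt_2 {Γ : Type*} [AddCommGroup Γ] [LinearOrder Γ] [IsOrderedAddMonoid Γ] [Module ℚ Γ] {n m : ℕ}
    (D : Set (Fin n → Γ)) (g : (Fin n → Γ) → Γ) (f : Fin m → (Fin n → Γ) → Γ)
    (haff : ∀ i, ∃ (q : Fin n → ℚ) (c : Γ), ∀ x, f i x = (∑ j, q j • x j) + c)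
    (hw : ∀ x ∈ D, ∃ i, g x = f i x)
    (hsep : ∀ x ∈ D, ∀ y ∈ D, ∃ i, f i x ≤ g x ∧ g y ≤ f i y) :
    ∃ (S : Finset (Finset (Fin m))) (h : ∀ X ∈ S, X.Nonempty),
      ∀ x ∈ D, ∃ hS : S.Nonempty, g x = minMax S hS h (fun i => f i x) := by
  classical
  set S : Finset (Finset (Fin m)) :=
    Finset.univ.filter
      (fun X => ∃ y ∈ D, X = Finset.univ.filter (fun i => f i y ≤ g y)) with hSdef
  have hmem : ∀ y ∈ D, (Finset.univ.filter (fun i => f i y ≤ g y)) ∈ S := by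
    intro y hy
    simp only [hSdef, Finset.mem_filter, Finset.mem_univ, true_and]
    exact ⟨y, hy, rfl⟩
  have hne : ∀ X ∈ S, X.Nonempty := by
    intro X hX
    simp only [hSdef, Finset.mem_filter, Finset.mem_univ, true_and] at hX
    obtain ⟨y, hy, rfl⟩ := hX
    obtain ⟨i, hi⟩ := hw y hy
    exact ⟨i, by simp [hi.ge]⟩
  refine ⟨S, hne, ?_⟩
  intro x hx
  have hSne : S.Nonempty := ⟨_, hmem x hx⟩
  refine ⟨hSne, ?_⟩
  unfold minMax
  apply le_antisymm
  · apply Finset.le_inf'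
    rintro ⟨X, hX⟩ -
    have hX' := hX
    simp only [hSdef, Finset.mem_filter, Finset.mem_univ, true_and] at hX'
    obtain ⟨y, hy, rfl⟩ := hX'
    obtain ⟨i, hi1, hi2⟩ := hsep y hy x hx
    exact Finset.le_sup'_of_le _ (by simp [hi1]) hi2
  · refine le_trans (Finset.inf'_le _ (Finset.mem_attach _ ⟨_, hmem x hx⟩)) ?_
    apply Finset.sup'_le
    intro i hi
    simpa using (Finset.mem_filter.mp hi).2
end

section
/- Let Γ be a model of DOAG, D ⊆ Γ^n an A-definable set, and f : D → Γ an A-definable Lipschitz function. Suppose f is a w-combination of the restrictions to D of finitely many Q-affine A-definable functions f_1,…,f_m. Then f admits a unique continuous extension f̄ to the topological closure D̄ of D; moreover f̄ is Lipschitz (with the same constant bound up to the slopes of the f_i), and f̄ is a w-combination of the restrictions of f_1,…,f_m to D̄. -/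
/-- A basic cell in `Γ^n`: the solution set of a finite system of ℚ-affine
(strict or non-strict) inequalities `∑ q_j x_j < c` / `∑ q_j x_j ≤ c`. -/
def QAffineCell {Γ : Type*} [AddCommGroup Γ] [LinearOrder Γ] [IsOrderedAddMonoid Γ] [Module ℚ Γ] {n : ℕ}
    (s : Finset ((Fin n → ℚ) × Γ × Bool)) : Set (Fin n → Γ) :=
  {x | ∀ p ∈ s, if p.2.2 = true then (∑ j, p.1 j • x j) < p.2.1
       else (∑ j, p.1 j • x j) ≤ p.2.1}

/-- A (with parameters) definable subset of `Γ^n` in DOAG: a finite union of cells. -/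
def Semilinear {Γ : Type*} [AddCommGroup Γ] [LinearOrder Γ] [IsOrderedAddMonoid Γ] [Module ℚ Γ] {n : ℕ}
    (D : Set (Fin n → Γ)) : Prop :=
  ∃ (k : ℕ) (c : Fin k → Finset ((Fin n → ℚ) × Γ × Bool)), D = ⋃ i, QAffineCell (c i)

/-- `f` is Lipschitz with constant `M ∈ ℕ` on `D` (w.r.t. `|x| = max_i |x_i|`). -/
def LipOn {Γ : Type*} [AddCommGroup Γ] [LinearOrder Γ] [IsOrderedAddMonoid Γ] {n : ℕ}
    (M : ℕ) (D : Set (Fin n → Γ)) (f : (Fin n → Γ) → Γ) : Prop :=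
  ∀ x ∈ D, ∀ y ∈ D, ∀ b : Γ, 0 ≤ b → (∀ i, |x i - y i| ≤ b) → |f x - f y| ≤ M • b


section Helpers
variable {Γ : Type*} [AddCommGroup Γ] [LinearOrder Γ] [IsOrderedAddMonoid Γ] [Module ℚ Γ]

lemma qsmul_nonneg' {q : ℚ} (hq : 0 ≤ q) {a : Γ} (ha : 0 ≤ a) : 0 ≤ q • a := by
  have hd0 : ((q.den : ℚ)) ≠ 0 := Nat.cast_ne_zero.2 q.den_nz
  set b : Γ := ((q.den : ℚ))⁻¹ • a with hb
  have hdb : (q.den : ℚ) • b = a := by rw [hb, smul_smul, mul_inv_cancel₀ hd0, one_smul]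
  have hdb' : q.den • b = a := by rw [← hdb, Nat.cast_smul_eq_nsmul]
  have hbnn : 0 ≤ b := by
    by_contra hlt
    push_neg at hlt
    have h1 : 0 < q.den • (-b) := nsmul_pos (neg_pos.2 hlt) q.den_pos.ne'
    rw [smul_neg, hdb'] at h1
    exact absurd (neg_pos.1 h1) (not_lt.2 ha)
  have hqa : q • a = q.num • b := by
    rw [← hdb, smul_smul, Rat.mul_den_eq_num, Int.cast_smul_eq_zsmul]
  rw [hqa]
  exact zsmul_nonneg hbnn (Rat.num_nonneg.2 hq)

instance : PosSMulMono ℚ Γ :=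
  ⟨fun q hq b₁ b₂ h => by
    have := qsmul_nonneg' hq (sub_nonneg.2 h)
    rw [smul_sub] at this
    exact sub_nonneg.1 this⟩

instance : SMulPosMono ℚ Γ :=
  ⟨fun b hb q₁ q₂ h => by
    have := qsmul_nonneg' (sub_nonneg.2 h) hb
    rw [sub_smul] at this
    exact sub_nonneg.1 this⟩

instance : PosSMulStrictMono ℚ Γ :=
  ⟨fun q hq b₁ b₂ h => by
    refine lt_of_le_of_ne (smul_le_smul_of_nonneg_left h.le hq.le) (fun he => h.ne ?_)
    have := congrArg (fun z => q⁻¹ • z) he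
    simpa [smul_smul, inv_mul_cancel₀ hq.ne'] using this⟩

lemma half_le' {x : Γ} (h : x ≤ (1/2 : ℚ) • x) : x ≤ 0 := by
  have h2 : (1/2 : ℚ) • x + (1/2 : ℚ) • x = x := by rw [← add_smul]; norm_num
  have h3 : (1/2 : ℚ) • x ≤ 0 := by
    have := eq_sub_of_add_eq h2
    rw [this]
    exact sub_nonpos.2 h
  exact h.trans h3

lemma nonpos_of_forall_le_nsmul' {a : Γ} (T : ℕ) (h : ∀ ε : Γ, 0 < ε → a ≤ T • ε) : a ≤ 0 := by
  by_contra hpos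
  push_neg at hpos
  set ε : Γ := (2 * (T : ℚ) + 2)⁻¹ • a with hε
  have hεpos : 0 < ε := smul_pos (by positivity) hpos
  have h2 : T • ε = ((T : ℚ) * (2 * (T : ℚ) + 2)⁻¹) • a := by
    rw [← Nat.cast_smul_eq_nsmul ℚ, hε, smul_smul]
  have h3 : ((T : ℚ) * (2 * (T : ℚ) + 2)⁻¹) ≤ 1/2 := by
    rw [← div_eq_mul_inv, div_le_iff₀ (by positivity)]
    ring_nf
    linarith [Nat.cast_nonneg (α := ℚ) T]
  have h4 : a ≤ (1/2 : ℚ) • a := by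
    calc a ≤ T • ε := h ε hεpos
    _ = ((T : ℚ) * (2 * (T : ℚ) + 2)⁻¹) • a := h2
    _ ≤ (1/2 : ℚ) • a := smul_le_smul_of_nonneg_right h3 hpos.le
  exact absurd (half_le' h4) (not_le.2 hpos)

lemma le_add_of_forall_le_nsmul' {a b : Γ} (T : ℕ) (h : ∀ ε : Γ, 0 < ε → a ≤ b + T • ε) :
    a ≤ b := by
  have := nonpos_of_forall_le_nsmul' (a := a - b) T (fun ε hε => by
    rw [sub_le_iff_le_add, add_comm]; exact h ε hε)
  exact sub_nonpos.1 this

variable {n : ℕ}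

omit [Module ℚ Γ] in
lemma exists_near' [TopologicalSpace Γ] [OrderTopology Γ] {S : Set (Fin n → Γ)}
    {x : Fin n → Γ} (hx : x ∈ closure S) {ε : Γ} (hε : 0 < ε) :
    ∃ y ∈ S, ∀ k, |y k - x k| ≤ ε := by
  set U : Set (Fin n → Γ) :=
    ⋂ k, (fun y : Fin n → Γ => y k) ⁻¹' Set.Ioo (x k - ε) (x k + ε) with hU
  have hUopen : IsOpen U :=
    isOpen_iInter_of_finite fun k => isOpen_Ioo.preimage (continuous_apply k)
  have hxU : x ∈ U := Set.mem_iInter.2 fun k => ⟨sub_lt_self _ hε, lt_add_of_pos_right _ hε⟩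
  obtain ⟨y, hyU, hyS⟩ := mem_closure_iff.1 hx U hUopen hxU
  refine ⟨y, hyS, fun k => ?_⟩
  have h1 := Set.mem_iInter.1 hyU k
  refine le_of_lt (abs_sub_lt_iff.2 ⟨?_, ?_⟩)
  · rw [sub_lt_iff_lt_add, add_comm]; exact h1.2
  · exact sub_lt_comm.1 h1.1

lemma lipOn_continuousOn' [TopologicalSpace Γ] [OrderTopology Γ] {M : ℕ}
    {E : Set (Fin n → Γ)} {g : (Fin n → Γ) → Γ} (hg : LipOn M E g) :
    ContinuousOn g E := by
  intro x hx
  have key : ∀ e : Γ, 0 < e → ∀ᶠ y in nhdsWithin x E, |g y - g x| < e := by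
    intro e he
    set δ : Γ := (2 * (M : ℚ) + 2)⁻¹ • e with hδdef
    have hδ : 0 < δ := smul_pos (by positivity) he
    have hMδ : M • δ < e := by
      have h2 : M • δ = ((M : ℚ) * (2 * (M : ℚ) + 2)⁻¹) • e := by
        rw [← Nat.cast_smul_eq_nsmul ℚ, hδdef, smul_smul]
      have h3 : ((M : ℚ) * (2 * (M : ℚ) + 2)⁻¹) ≤ 1/2 := by
        rw [← div_eq_mul_inv, div_le_iff₀ (by positivity)]
        ring_nf
        linarith [Nat.cast_nonneg (α := ℚ) M]
      have hhalf : (1/2 : ℚ) • e < e := by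
        have h2' : (1/2 : ℚ) • e + (1/2 : ℚ) • e = e := by rw [← add_smul]; norm_num
        have hp : 0 < (1/2 : ℚ) • e := smul_pos (by norm_num) he
        calc (1/2 : ℚ) • e < (1/2 : ℚ) • e + (1/2 : ℚ) • e := lt_add_of_pos_right _ hp
        _ = e := h2'
      calc M • δ = ((M : ℚ) * (2 * (M : ℚ) + 2)⁻¹) • e := h2
      _ ≤ (1/2 : ℚ) • e := smul_le_smul_of_nonneg_right h3 he.le
      _ < e := hhalf
    set U : Set (Fin n → Γ) :=
      ⋂ k, (fun y : Fin n → Γ => y k) ⁻¹' Set.Ioo (x k - δ) (x k + δ) with hU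
    have hUopen : IsOpen U :=
      isOpen_iInter_of_finite fun k => isOpen_Ioo.preimage (continuous_apply k)
    have hxU : x ∈ U := Set.mem_iInter.2 fun k => ⟨sub_lt_self _ hδ, lt_add_of_pos_right _ hδ⟩
    filter_upwards [mem_nhdsWithin_of_mem_nhds (hUopen.mem_nhds hxU), self_mem_nhdsWithin]
      with y hyU hyE
    have hbnd : ∀ k, |y k - x k| ≤ δ := by
      intro k
      have h1 := Set.mem_iInter.1 hyU k
      refine le_of_lt (abs_sub_lt_iff.2 ⟨?_, ?_⟩)
      · rw [sub_lt_iff_lt_add, add_comm]; exact h1.2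
      · exact sub_lt_comm.1 h1.1
    exact lt_of_le_of_lt (hg y hyE x hx δ hδ.le hbnd) hMδ
  refine tendsto_order.2 ⟨fun a ha => ?_, fun b hb => ?_⟩
  · filter_upwards [key (g x - a) (sub_pos.2 ha)] with y hy
    have := (abs_lt.1 hy).1
    rw [neg_sub] at this
    exact (sub_lt_sub_iff_right (g x)).1 this
  · filter_upwards [key (b - g x) (sub_pos.2 hb)] with y hy
    have := (abs_lt.1 hy).2
    exact (sub_lt_sub_iff_right (g x)).1 this

end Helpers

/-- Let `Γ ⊨ DOAG`, `D ⊆ Γ^n` a definable set, and `f : D → Γ` a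
definable Lipschitz function which is a w-combination of the restrictions of
finitely many ℚ-affine functions `f_i = ∑_j q_{ij} x_j + c_i`.  Then `f` has a
unique continuous extension `f̄` to the closure of `D`; moreover `f̄` is Lipschitz
and is a w-combination of the restrictions of the `f_i` to the closure. -/
theorem stmt_8 {Γ : Type*} [AddCommGroup Γ] [LinearOrder Γ] [IsOrderedAddMonoid Γ] [Module ℚ Γ]
    [TopologicalSpace Γ] [OrderTopology Γ] {n m : ℕ}
    (D : Set (Fin n → Γ)) (hD : Semilinear D)
    (f : (Fin n → Γ) → Γ) (M : ℕ) (hLip : LipOn M D f)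
    (q : Fin m → Fin n → ℚ) (c : Fin m → Γ)
    (hw : ∀ x ∈ D, ∃ i, f x = (∑ j, q i j • x j) + c i) :
    ∃ fbar : (Fin n → Γ) → Γ,
      (∀ x ∈ D, fbar x = f x) ∧
      ContinuousOn fbar (closure D) ∧
      (∃ M' : ℕ, LipOn M' (closure D) fbar) ∧
      (∀ x ∈ closure D, ∃ i, fbar x = (∑ j, q i j • x j) + c i) ∧
      (∀ h : (Fin n → Γ) → Γ, ContinuousOn h (closure D) →
        (∀ x ∈ D, h x = f x) → ∀ x ∈ closure D, h x = fbar x) := by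
  classical
  set F : Fin m → (Fin n → Γ) → Γ := fun i x => (∑ j, q i j • x j) + c i with hFdef
  set S : Fin m → Set (Fin n → Γ) := fun i => {y | y ∈ D ∧ f y = F i y} with hSdef
  have hFapp : ∀ i x, F i x = (∑ j, q i j • x j) + c i := fun i x => rfl
  set K : ℕ := ⌈∑ i, ∑ j, |q i j|⌉₊ with hKdef
  have hK : ∀ i, (∑ j, |q i j|) ≤ (K : ℚ) := by
    intro i
    refine le_trans ?_ (Nat.le_ceil _)
    exact Finset.single_le_sum (f := fun i => ∑ j, |q i j|)
      (fun i _ => Finset.sum_nonneg fun j _ => abs_nonneg _) (Finset.mem_univ i)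
  have hFb : ∀ (i : Fin m) (x y : Fin n → Γ) (ε : Γ), 0 ≤ ε →
      (∀ k, |x k - y k| ≤ ε) → |F i x - F i y| ≤ K • ε := by
    intro i x y ε hε hxy
    have h1 : F i x - F i y = ∑ j, q i j • (x j - y j) := by
      simp only [hFapp, add_sub_add_right_eq_sub, ← Finset.sum_sub_distrib, ← smul_sub]
    calc |F i x - F i y| = |∑ j, q i j • (x j - y j)| := by rw [h1]
    _ ≤ ∑ j, |q i j • (x j - y j)| := Finset.abs_sum_le_sum_abs _ _
    _ = ∑ j, |q i j| • |x j - y j| := by simp only [abs_smul]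
    _ ≤ ∑ j, |q i j| • ε :=
        Finset.sum_le_sum fun j _ => smul_le_smul_of_nonneg_left (hxy j) (abs_nonneg _)
    _ = (∑ j, |q i j|) • ε := (Finset.sum_smul).symm
    _ ≤ ((K : ℚ)) • ε := smul_le_smul_of_nonneg_right (hK i) hε
    _ = K • ε := Nat.cast_smul_eq_nsmul ℚ K ε
  have hwd : ∀ (i j : Fin m) (x : Fin n → Γ),
      x ∈ closure (S i) → x ∈ closure (S j) → F i x = F j x := by
    intro i j x hxi hxj
    have key : ∀ ε : Γ, 0 < ε → |F i x - F j x| ≤ (K + M + M + K) • ε := by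
      intro ε hε
      obtain ⟨y, hyS, hy⟩ := exists_near' hxi hε
      obtain ⟨z, hzS, hz⟩ := exists_near' hxj hε
      have hyz : ∀ k, |y k - z k| ≤ ε + ε := fun k =>
        (abs_sub_le _ (x k) _).trans
          (add_le_add (hy k) (by rw [abs_sub_comm]; exact hz k))
      have hM : |f y - f z| ≤ M • (ε + ε) :=
        hLip y hyS.1 z hzS.1 (ε + ε) (add_nonneg hε.le hε.le) hyz
      have t1 : |F i x - F j x| ≤ |F i x - F i y| + |F i y - F j z| + |F j z - F j x| := by
        calc |F i x - F j x| ≤ |F i x - F j z| + |F j z - F j x| := abs_sub_le _ _ _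
        _ ≤ |F i x - F i y| + |F i y - F j z| + |F j z - F j x| :=
            add_le_add_left (abs_sub_le _ _ _) _
      have e1 : |F i x - F i y| ≤ K • ε :=
        hFb i x y ε hε.le (fun k => by rw [abs_sub_comm]; exact hy k)
      have e2 : |F i y - F j z| ≤ M • ε + M • ε := by
        rw [← hyS.2, ← hzS.2, ← smul_add]; exact hM
      have e3 : |F j z - F j x| ≤ K • ε := hFb j z x ε hε.le hz
      calc |F i x - F j x| ≤ K • ε + (M • ε + M • ε) + K • ε :=
          t1.trans (add_le_add (add_le_add e1 e2) e3)
      _ = (K + M + M + K) • ε := by simp only [add_nsmul]; abel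
    have h0 : |F i x - F j x| ≤ 0 := nonpos_of_forall_le_nsmul' _ key
    exact sub_eq_zero.1 (abs_eq_zero.1 (le_antisymm h0 (abs_nonneg _)))
  have hclo : ∀ x ∈ closure D, ∃ i, x ∈ closure (S i) := by
    intro x hx
    have hsub : D ⊆ ⋃ i, S i := fun y hy => by
      obtain ⟨i, hi⟩ := hw y hy
      exact Set.mem_iUnion.2 ⟨i, hy, hi⟩
    have h1 : closure D ⊆ ⋃ i, closure (S i) :=
      closure_minimal (hsub.trans (Set.iUnion_mono fun i => subset_closure))
        (isClosed_iUnion_of_finite fun i => isClosed_closure)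
    exact Set.mem_iUnion.1 (h1 hx)
  set fbar : (Fin n → Γ) → Γ :=
    fun x => if h : ∃ i, x ∈ closure (S i) then F h.choose x else f x with hfbardef
  have hfbar : ∀ (x : Fin n → Γ) (i : Fin m), x ∈ closure (S i) → fbar x = F i x := by
    intro x i hxi
    have hex : ∃ i, x ∈ closure (S i) := ⟨i, hxi⟩
    rw [hfbardef]
    simp only [dif_pos hex]
    exact hwd hex.choose i x hex.choose_spec hxi
  have hext : ∀ x ∈ D, fbar x = f x := by
    intro x hx
    obtain ⟨i, hfi⟩ := hw x hx
    have hxSi : x ∈ S i := ⟨hx, hfi⟩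
    rw [hfbar x i (subset_closure hxSi)]
    exact hfi.symm
  have hLipbar : LipOn M (closure D) fbar := by
    intro x hx y hy b hb hxy
    obtain ⟨i, hi⟩ := hclo x hx
    obtain ⟨j, hj⟩ := hclo y hy
    rw [hfbar x i hi, hfbar y j hj]
    refine le_add_of_forall_le_nsmul' (K + K + M + M) (fun ε hε => ?_)
    obtain ⟨y', hy'S, hy'⟩ := exists_near' hi hε
    obtain ⟨z', hz'S, hz'⟩ := exists_near' hj hε
    have hb' : ∀ k, |y' k - z' k| ≤ ε + (b + ε) := fun k =>
      (abs_sub_le (y' k) (x k) (z' k)).trans (add_le_add (hy' k)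
        ((abs_sub_le (x k) (y k) (z' k)).trans
          (add_le_add (hxy k) (by rw [abs_sub_comm]; exact hz' k))))
    have hM : |f y' - f z'| ≤ M • (ε + (b + ε)) :=
      hLip y' hy'S.1 z' hz'S.1 _ (add_nonneg hε.le (add_nonneg hb hε.le)) hb'
    have t1 : |F i x - F j y| ≤ |F i x - F i y'| + |F i y' - F j z'| + |F j z' - F j y| := by
      calc |F i x - F j y| ≤ |F i x - F j z'| + |F j z' - F j y| := abs_sub_le _ _ _
      _ ≤ |F i x - F i y'| + |F i y' - F j z'| + |F j z' - F j y| :=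
          add_le_add_left (abs_sub_le _ _ _) _
    have e1 : |F i x - F i y'| ≤ K • ε :=
      hFb i x y' ε hε.le (fun k => by rw [abs_sub_comm]; exact hy' k)
    have e2 : |F i y' - F j z'| ≤ M • ε + (M • b + M • ε) := by
      rw [← hy'S.2, ← hz'S.2, ← smul_add, ← smul_add]; exact hM
    have e3 : |F j z' - F j y| ≤ K • ε := hFb j z' y ε hε.le hz'
    calc |F i x - F j y| ≤ K • ε + (M • ε + (M • b + M • ε)) + K • ε :=
        t1.trans (add_le_add (add_le_add e1 e2) e3)
    _ = M • b + (K + K + M + M) • ε := by simp only [add_nsmul]; abel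
  have hcontbar : ContinuousOn fbar (closure D) := lipOn_continuousOn' hLipbar
  refine ⟨fbar, hext, hcontbar, ⟨M, hLipbar⟩, ?_, ?_⟩
  · intro x hx
    obtain ⟨i, hi⟩ := hclo x hx
    exact ⟨i, hfbar x i hi⟩
  · intro h hcont hhf x hx
    haveI : (nhdsWithin x D).NeBot := mem_closure_iff_nhdsWithin_neBot.1 hx
    have T1 : Filter.Tendsto h (nhdsWithin x D) (nhds (h x)) :=
      (hcont x hx).mono_left (nhdsWithin_mono x subset_closure)
    have T2 : Filter.Tendsto fbar (nhdsWithin x D) (nhds (fbar x)) :=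
      (hcontbar x hx).mono_left (nhdsWithin_mono x subset_closure)
    have heq : ∀ᶠ y in nhdsWithin x D, h y = fbar y := by
      filter_upwards [self_mem_nhdsWithin] with y hyD
      rw [hhf y hyD, ← hext y hyD]
    exact tendsto_nhds_unique (T1.congr' heq) T2
end

section
/- Let Γ be a divisible ordered abelian group, M ⊆ Γ a divisible subgroup, and ρ ∈ Γ with ρ > m for all m ∈ M. Suppose γ ∈ M ⊕ Q·ρ (the subgroup generated by M and all rational multiples of ρ). Then there exist a positive integer m, an integer k, and β ∈ M such that γ = (k/m)·ρ + β, and for a Z-affine function with such constants restricted to the box [−ρ, ρ]^n, replacing ρ by any sufficiently large element ν of M yields (by o-minimality of DOAG) the same identities on [−m·ν, m·ν]^n. In particular: if an identity h = t(x_1,…,x_n, k·ν + β) between definable functions over M holds for ν = ρ/m, and all data except ν are M-definable, then there exists ν_0 ∈ M such that the identity holds for all ν > ν_0 in M. -/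
/-- Terms in the operations `+`, `−`, `min`, `max`, variables and constants. -/
inductive MMTerm (Γ : Type*) (n : ℕ) : Type _ where
  | const : Γ → MMTerm Γ n
  | var : Fin n → MMTerm Γ n
  | add : MMTerm Γ n → MMTerm Γ n → MMTerm Γ n
  | neg : MMTerm Γ n → MMTerm Γ n
  | min : MMTerm Γ n → MMTerm Γ n → MMTerm Γ n
  | max : MMTerm Γ n → MMTerm Γ n → MMTerm Γ n

def MMTerm.eval {Γ : Type*} [LinearOrder Γ] [AddCommGroup Γ] {n : ℕ} :
    MMTerm Γ n → (Fin n → Γ) → Γ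
  | .const c, _ => c
  | .var i, x => x i
  | .add t s, x => t.eval x + s.eval x
  | .neg t, x => -t.eval x
  | .min t s, x => Min.min (t.eval x) (s.eval x)
  | .max t s, x => Max.max (t.eval x) (s.eval x)

/-- All constants of the term lie in `S`. -/
def MMTerm.ConstsIn {Γ : Type*} {n : ℕ} (S : Set Γ) : MMTerm Γ n → Prop
  | .const c => c ∈ S
  | .var _ => True
  | .add t s => t.ConstsIn S ∧ s.ConstsIn S
  | .neg t => t.ConstsIn S
  | .min t s => t.ConstsIn S ∧ s.ConstsIn S
  | .max t s => t.ConstsIn S ∧ s.ConstsIn S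

/-- The cell in `Δ^n` cut out by a finite system of ℚ-affine inequalities with
constants from `Γ` transported along `f : Γ → Δ`. -/
def cellSet {Γ Δ : Type*} [AddCommGroup Δ] [LinearOrder Δ] [IsOrderedAddMonoid Δ] [Module ℚ Δ] {n : ℕ}
    (f : Γ → Δ) (s : Finset ((Fin n → ℚ) × Γ × Bool)) : Set (Fin n → Δ) :=
  {x | ∀ p ∈ s, if p.2.2 = true then (∑ j, p.1 j • x j) < f p.2.1
       else (∑ j, p.1 j • x j) ≤ f p.2.1}

section OrderSmul
variable {Γ : Type*} [AddCommGroup Γ] [LinearOrder Γ] [IsOrderedAddMonoid Γ] [Module ℚ Γ]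

lemma qsmul_pos {q : ℚ} (hq : 0 < q) {a : Γ} (ha : 0 < a) : 0 < q • a := by
  by_contra h
  push_neg at h
  have h1 : (q.den : ℚ) * q = (q.num : ℚ) := by
    rw [mul_comm]; exact_mod_cast q.mul_den_eq_num
  have h2 : (q.den : ℕ) • (q • a) = (q.num : ℤ) • a := by
    rw [← Nat.cast_smul_eq_nsmul ℚ, smul_smul, h1, Int.cast_smul_eq_zsmul]
  have h3 : (0:Γ) < (q.num : ℤ) • a := zsmul_pos ha (Rat.num_pos.2 hq)
  have h4 : (q.den : ℕ) • (q • a) ≤ 0 := nsmul_nonpos h q.den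
  rw [h2] at h4; exact absurd h3 (not_lt.2 h4)

lemma qsmul_lt_iff_pos {q : ℚ} (hq : 0 < q) {a b : Γ} : q • a < q • b ↔ a < b := by
  constructor
  · intro h
    by_contra hh; push_neg at hh
    rcases eq_or_lt_of_le hh with rfl | hh
    · exact lt_irrefl _ h
    · have := qsmul_pos hq (sub_pos.2 hh)
      rw [smul_sub, sub_pos] at this
      exact absurd this (not_lt.2 h.le)
  · intro h
    have := qsmul_pos hq (sub_pos.2 h)
    rw [smul_sub, sub_pos] at this; exact this

lemma qsmul_lt_iff_neg {q : ℚ} (hq : q < 0) {a b : Γ} : q • a < q • b ↔ b < a := by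
  have h0 : 0 < -q := neg_pos.2 hq
  rw [show q • a = -((-q) • a) by rw [neg_smul, neg_neg],
      show q • b = -((-q) • b) by rw [neg_smul, neg_neg],
      neg_lt_neg_iff, qsmul_lt_iff_pos h0]

lemma qsmul_le_iff_pos {q : ℚ} (hq : 0 < q) {a b : Γ} : q • a ≤ q • b ↔ a ≤ b := by
  rw [← not_lt, ← not_lt, qsmul_lt_iff_pos hq]

lemma qsmul_le_iff_neg {q : ℚ} (hq : q < 0) {a b : Γ} : q • a ≤ q • b ↔ b ≤ a := by
  rw [← not_lt, ← not_lt, qsmul_lt_iff_neg hq]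

lemma qsmul_neg_invd {q : ℚ} (hq : q ≠ 0) (r : Γ) : q • ((-(1/q)) • r) = -r := by
  rw [smul_smul, show q * (-(1/q)) = -1 by field_simp, neg_smul, one_smul]

lemma pos_lt_iff {q : ℚ} (hq : 0 < q) (t r : Γ) :
    q • t + r < 0 ↔ t < (-(1/q)) • r := by
  rw [show (q • t + r < 0) ↔ (q • t < -r) by rw [show (0:Γ) = -r + r by simp, add_lt_add_iff_right],
    ← qsmul_neg_invd (ne_of_gt hq) r, qsmul_lt_iff_pos hq]

lemma pos_le_iff {q : ℚ} (hq : 0 < q) (t r : Γ) :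
    q • t + r ≤ 0 ↔ t ≤ (-(1/q)) • r := by
  rw [show (q • t + r ≤ 0) ↔ (q • t ≤ -r) by rw [show (0:Γ) = -r + r by simp, add_le_add_iff_right],
    ← qsmul_neg_invd (ne_of_gt hq) r, qsmul_le_iff_pos hq]

lemma neg_lt_iff' {q : ℚ} (hq : q < 0) (t r : Γ) :
    q • t + r < 0 ↔ (-(1/q)) • r < t := by
  rw [show (q • t + r < 0) ↔ (q • t < -r) by rw [show (0:Γ) = -r + r by simp, add_lt_add_iff_right],
    ← qsmul_neg_invd (ne_of_lt hq) r, qsmul_lt_iff_neg hq]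

lemma neg_le_iff' {q : ℚ} (hq : q < 0) (t r : Γ) :
    q • t + r ≤ 0 ↔ (-(1/q)) • r ≤ t := by
  rw [show (q • t + r ≤ 0) ↔ (q • t ≤ -r) by rw [show (0:Γ) = -r + r by simp, add_le_add_iff_right],
    ← qsmul_neg_invd (ne_of_lt hq) r, qsmul_le_iff_neg hq]

lemma midpoint_between {a b : Γ} (h : a < b) :
    a < (1/2 : ℚ) • (a + b) ∧ (1/2 : ℚ) • (a + b) < b := by
  constructor
  · have : ((1:ℚ)/2) • (a+a) < ((1:ℚ)/2) • (a+b) :=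
      (qsmul_lt_iff_pos (by norm_num)).2 (by exact add_lt_add_right h a)
    calc a = ((1:ℚ)/2) • (a+a) := by
            rw [show a + a = (2:ℚ) • a by rw [show (2:ℚ) = 1+1 by norm_num, add_smul, one_smul],
              smul_smul]; norm_num
      _ < _ := this
  · have : ((1:ℚ)/2) • (a+b) < ((1:ℚ)/2) • (b+b) :=
      (qsmul_lt_iff_pos (by norm_num)).2 (by exact add_lt_add_left h b)
    calc ((1:ℚ)/2) • (a+b) < ((1:ℚ)/2) • (b+b) := this
      _ = b := by
            rw [show b + b = (2:ℚ) • b by rw [show (2:ℚ) = 1+1 by norm_num, add_smul, one_smul],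
              smul_smul]; norm_num

end OrderSmul
section Lists
variable {α : Type*} [LinearOrder α] [Zero α]

def lmin : List α → α
  | [] => 0
  | [a] => a
  | a :: b :: l => min a (lmin (b :: l))

def lmax : List α → α
  | [] => 0
  | [a] => a
  | a :: b :: l => max a (lmax (b :: l))

lemma lmin_cons {l : List α} (h : l ≠ []) (a : α) : lmin (a :: l) = min a (lmin l) := by
  cases l with
  | nil => exact absurd rfl h
  | cons b l => rfl

lemma lmax_cons {l : List α} (h : l ≠ []) (a : α) : lmax (a :: l) = max a (lmax l) := by
  cases l with
  | nil => exact absurd rfl h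
  | cons b l => rfl

lemma lmin_mem : ∀ {l : List α}, l ≠ [] → lmin l ∈ l
  | [], h => absurd rfl h
  | [a], _ => by simp [lmin]
  | a :: b :: l, _ => by
      rw [lmin_cons (by simp)]
      rcases min_cases a (lmin (b :: l)) with ⟨h, _⟩ | ⟨h, _⟩
      · rw [h]; exact List.mem_cons_self
      · rw [h]; exact List.mem_cons_of_mem _ (lmin_mem (by simp))

lemma lmax_mem : ∀ {l : List α}, l ≠ [] → lmax l ∈ l
  | [], h => absurd rfl h
  | [a], _ => by simp [lmax]
  | a :: b :: l, _ => by
      rw [lmax_cons (by simp)]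
      rcases max_cases a (lmax (b :: l)) with ⟨h, _⟩ | ⟨h, _⟩
      · rw [h]; exact List.mem_cons_self
      · rw [h]; exact List.mem_cons_of_mem _ (lmax_mem (by simp))

lemma lmin_le : ∀ {l : List α} {a : α}, a ∈ l → lmin l ≤ a
  | [], a, h => by simp at h
  | [b], a, h => by simp at h; simp [lmin, h]
  | b :: c :: l, a, h => by
      rw [lmin_cons (by simp)]
      rcases List.mem_cons.1 h with rfl | h
      · exact min_le_left _ _
      · exact le_trans (min_le_right _ _) (lmin_le h)

lemma le_lmax : ∀ {l : List α} {a : α}, a ∈ l → a ≤ lmax l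
  | [], a, h => by simp at h
  | [b], a, h => by simp at h; simp [lmax, h]
  | b :: c :: l, a, h => by
      rw [lmax_cons (by simp)]
      rcases List.mem_cons.1 h with rfl | h
      · exact le_max_left _ _
      · exact le_trans (le_lmax h) (le_max_right _ _)

lemma le_lmin {l : List α} (h : l ≠ []) {c : α} (H : ∀ a ∈ l, c ≤ a) : c ≤ lmin l :=
  H _ (lmin_mem h)

lemma lmax_le {l : List α} (h : l ≠ []) {c : α} (H : ∀ a ∈ l, a ≤ c) : lmax l ≤ c :=
  H _ (lmax_mem h)

lemma lmin_append : ∀ {l₁ l₂ : List α}, l₁ ≠ [] → l₂ ≠ [] →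
    lmin (l₁ ++ l₂) = min (lmin l₁) (lmin l₂)
  | [], _, h, _ => absurd rfl h
  | [a], l₂, _, h₂ => by rw [List.singleton_append, lmin_cons h₂]; rfl
  | a :: b :: l, l₂, _, h₂ => by
      rw [List.cons_append, lmin_cons (by simp), lmin_cons (by simp),
        lmin_append (l₁ := b :: l) (by simp) h₂, min_assoc]

lemma lmax_append : ∀ {l₁ l₂ : List α}, l₁ ≠ [] → l₂ ≠ [] →
    lmax (l₁ ++ l₂) = max (lmax l₁) (lmax l₂)
  | [], _, h, _ => absurd rfl h
  | [a], l₂, _, h₂ => by rw [List.singleton_append, lmax_cons h₂]; rfl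
  | a :: b :: l, l₂, _, h₂ => by
      rw [List.cons_append, lmax_cons (by simp), lmax_cons (by simp),
        lmax_append (l₁ := b :: l) (by simp) h₂, max_assoc]

lemma lmin_lt_iff {l : List α} (h : l ≠ []) {c : α} : lmin l < c ↔ ∃ a ∈ l, a < c :=
  ⟨fun H => ⟨lmin l, lmin_mem h, H⟩, fun ⟨a, ha, H⟩ => lt_of_le_of_lt (lmin_le ha) H⟩

lemma lt_lmax_iff {l : List α} (h : l ≠ []) {c : α} : c < lmax l ↔ ∃ a ∈ l, c < a :=
  ⟨fun H => ⟨lmax l, lmax_mem h, H⟩, fun ⟨a, ha, H⟩ => lt_of_lt_of_le H (le_lmax ha)⟩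

lemma lmax_lt_iff {l : List α} (h : l ≠ []) {c : α} : lmax l < c ↔ ∀ a ∈ l, a < c :=
  ⟨fun H a ha => lt_of_le_of_lt (le_lmax ha) H, fun H => H _ (lmax_mem h)⟩

lemma lmin_map_ex {β : Type*} {l : List β} (h : l ≠ []) (f : β → α) :
    ∃ b ∈ l, lmin (l.map f) = f b := by
  have h' : l.map f ≠ [] := by simpa using h
  obtain ⟨b, hb, he⟩ := List.mem_map.1 (lmin_mem h')
  exact ⟨b, hb, he.symm⟩

lemma lmax_map_ex {β : Type*} {l : List β} (h : l ≠ []) (f : β → α) :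
    ∃ b ∈ l, lmax (l.map f) = f b := by
  have h' : l.map f ≠ [] := by simpa using h
  obtain ⟨b, hb, he⟩ := List.mem_map.1 (lmax_mem h')
  exact ⟨b, hb, he.symm⟩

end Lists

section Lists2
variable {Γ : Type*} [AddCommGroup Γ] [LinearOrder Γ] [IsOrderedAddMonoid Γ]

private lemma prod_ne_nil {β γ : Type*} {l₁ : List β} {l₂ : List γ} (h₁ : l₁ ≠ [])
    (h₂ : l₂ ≠ []) : l₁.product l₂ ≠ [] := by
  obtain ⟨a, ha⟩ := List.exists_mem_of_ne_nil l₁ h₁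
  obtain ⟨b, hb⟩ := List.exists_mem_of_ne_nil l₂ h₂
  intro h
  exact absurd (List.pair_mem_product.2 ⟨ha, hb⟩) (by simp [h])

lemma lmax_prod_add {β γ : Type*} {l₁ : List β} {l₂ : List γ} (h₁ : l₁ ≠ [])
    (h₂ : l₂ ≠ []) (f : β → Γ) (g : γ → Γ) :
    lmax ((l₁.product l₂).map (fun p => f p.1 + g p.2)) =
      lmax (l₁.map f) + lmax (l₂.map g) := by
  have hp : l₁.product l₂ ≠ [] := prod_ne_nil h₁ h₂
  apply le_antisymm
  · apply lmax_le (by simpa using hp)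
    intro a ha
    obtain ⟨⟨b, c⟩, hbc, rfl⟩ := List.mem_map.1 ha
    obtain ⟨hb, hc⟩ := List.pair_mem_product.1 hbc
    exact add_le_add (le_lmax (List.mem_map_of_mem (f := f) hb)) (le_lmax (List.mem_map_of_mem (f := g) hc))
  · obtain ⟨b, hb, hbe⟩ := lmax_map_ex h₁ f
    obtain ⟨c, hc, hce⟩ := lmax_map_ex h₂ g
    rw [hbe, hce]
    exact le_lmax (List.mem_map.2 ⟨(b, c), List.pair_mem_product.2 ⟨hb, hc⟩, rfl⟩)

lemma lmin_prod_add {β γ : Type*} {l₁ : List β} {l₂ : List γ} (h₁ : l₁ ≠ [])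
    (h₂ : l₂ ≠ []) (f : β → Γ) (g : γ → Γ) :
    lmin ((l₁.product l₂).map (fun p => f p.1 + g p.2)) =
      lmin (l₁.map f) + lmin (l₂.map g) := by
  have hp : l₁.product l₂ ≠ [] := prod_ne_nil h₁ h₂
  apply le_antisymm
  · obtain ⟨b, hb, hbe⟩ := lmin_map_ex h₁ f
    obtain ⟨c, hc, hce⟩ := lmin_map_ex h₂ g
    rw [hbe, hce]
    exact lmin_le (List.mem_map.2 ⟨(b, c), List.pair_mem_product.2 ⟨hb, hc⟩, rfl⟩)
  · apply le_lmin (by simpa using hp)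
    intro a ha
    obtain ⟨⟨b, c⟩, hbc, rfl⟩ := List.mem_map.1 ha
    obtain ⟨hb, hc⟩ := List.pair_mem_product.1 hbc
    exact add_le_add (lmin_le (List.mem_map_of_mem (f := f) hb)) (lmin_le (List.mem_map_of_mem (f := g) hc))

lemma lmin_prod_max {β γ : Type*} {l₁ : List β} {l₂ : List γ} (h₁ : l₁ ≠ [])
    (h₂ : l₂ ≠ []) (f : β → Γ) (g : γ → Γ) :
    lmin ((l₁.product l₂).map (fun p => max (f p.1) (g p.2))) =
      max (lmin (l₁.map f)) (lmin (l₂.map g)) := by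
  have hp : l₁.product l₂ ≠ [] := prod_ne_nil h₁ h₂
  apply le_antisymm
  · obtain ⟨b, hb, hbe⟩ := lmin_map_ex h₁ f
    obtain ⟨c, hc, hce⟩ := lmin_map_ex h₂ g
    rw [hbe, hce]
    exact lmin_le (List.mem_map.2 ⟨(b, c), List.pair_mem_product.2 ⟨hb, hc⟩, rfl⟩)
  · apply le_lmin (by simpa using hp)
    intro a ha
    obtain ⟨⟨b, c⟩, hbc, rfl⟩ := List.mem_map.1 ha
    obtain ⟨hb, hc⟩ := List.pair_mem_product.1 hbc
    exact max_le_max (lmin_le (List.mem_map_of_mem (f := f) hb)) (lmin_le (List.mem_map_of_mem (f := g) hc))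

lemma lmax_prod_min {β γ : Type*} {l₁ : List β} {l₂ : List γ} (h₁ : l₁ ≠ [])
    (h₂ : l₂ ≠ []) (f : β → Γ) (g : γ → Γ) :
    lmax ((l₁.product l₂).map (fun p => min (f p.1) (g p.2))) =
      min (lmax (l₁.map f)) (lmax (l₂.map g)) := by
  have hp : l₁.product l₂ ≠ [] := prod_ne_nil h₁ h₂
  apply le_antisymm
  · apply lmax_le (by simpa using hp)
    intro a ha
    obtain ⟨⟨b, c⟩, hbc, rfl⟩ := List.mem_map.1 ha
    obtain ⟨hb, hc⟩ := List.pair_mem_product.1 hbc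
    exact min_le_min (le_lmax (List.mem_map_of_mem (f := f) hb)) (le_lmax (List.mem_map_of_mem (f := g) hc))
  · obtain ⟨b, hb, hbe⟩ := lmax_map_ex h₁ f
    obtain ⟨c, hc, hce⟩ := lmax_map_ex h₂ g
    rw [hbe, hce]
    exact le_lmax (List.mem_map.2 ⟨(b, c), List.pair_mem_product.2 ⟨hb, hc⟩, rfl⟩)

lemma lmin_map_neg {β : Type*} {l : List β} (h : l ≠ []) (f : β → Γ) :
    lmin (l.map (fun b => -f b)) = -lmax (l.map f) := by
  apply le_antisymm
  · obtain ⟨b, hb, hbe⟩ := lmax_map_ex h f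
    rw [hbe]
    exact lmin_le (List.mem_map.2 ⟨b, hb, rfl⟩)
  · apply le_lmin (by simpa using h)
    intro a ha
    obtain ⟨b, hb, rfl⟩ := List.mem_map.1 ha
    exact neg_le_neg (le_lmax (List.mem_map_of_mem (f := f) hb))

lemma lmax_map_neg {β : Type*} {l : List β} (h : l ≠ []) (f : β → Γ) :
    lmax (l.map (fun b => -f b)) = -lmin (l.map f) := by
  apply le_antisymm
  · apply lmax_le (by simpa using h)
    intro a ha
    obtain ⟨b, hb, rfl⟩ := List.mem_map.1 ha
    exact neg_le_neg (lmin_le (List.mem_map_of_mem (f := f) hb))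
  · obtain ⟨b, hb, hbe⟩ := lmin_map_ex h f
    rw [hbe]
    exact le_lmax (List.mem_map.2 ⟨b, hb, rfl⟩)

end Lists2
section Affine
variable {Γ : Type*} [AddCommGroup Γ] [LinearOrder Γ] [IsOrderedAddMonoid Γ] [Module ℚ Γ]

abbrev AffForm (Γ : Type*) (N : ℕ) := (Fin N → ℚ) × Γ

def aval {N : ℕ} (A : AffForm Γ N) (z : Fin N → Γ) : Γ := (∑ j, A.1 j • z j) + A.2

def fadd {N : ℕ} (A B : AffForm Γ N) : AffForm Γ N := (A.1 + B.1, A.2 + B.2)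
def fneg {N : ℕ} (A : AffForm Γ N) : AffForm Γ N := (-A.1, -A.2)

lemma aval_fadd {N : ℕ} (A B : AffForm Γ N) (z : Fin N → Γ) :
    aval (fadd A B) z = aval A z + aval B z := by
  simp only [aval, fadd, Pi.add_apply, add_smul, Finset.sum_add_distrib]
  abel

lemma aval_fneg {N : ℕ} (A : AffForm Γ N) (z : Fin N → Γ) :
    aval (fneg A) z = -aval A z := by
  simp only [aval, fneg, Pi.neg_apply, neg_smul, Finset.sum_neg_distrib]
  abel

abbrev MR (Γ : Type*) (N : ℕ) := List (List (AffForm Γ N))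

def MRValid {N : ℕ} (R : MR Γ N) : Prop := R ≠ [] ∧ ∀ l ∈ R, l ≠ []

def evalMM {N : ℕ} (R : MR Γ N) (z : Fin N → Γ) : Γ :=
  lmin (R.map fun l => lmax (l.map (fun A => aval A z)))

def evalXM {N : ℕ} (R : MR Γ N) (z : Fin N → Γ) : Γ :=
  lmax (R.map fun l => lmin (l.map (fun A => aval A z)))

def prodAdd {N : ℕ} (A B : MR Γ N) : MR Γ N :=
  (A.product B).map fun p => (p.1.product p.2).map fun q => fadd q.1 q.2

def prodApp {N : ℕ} (A B : MR Γ N) : MR Γ N :=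
  (A.product B).map fun p => p.1 ++ p.2

def mneg {N : ℕ} (A : MR Γ N) : MR Γ N := A.map (List.map fneg)

private lemma prod_ne_nil' {β γ : Type*} {l₁ : List β} {l₂ : List γ} (h₁ : l₁ ≠ [])
    (h₂ : l₂ ≠ []) : l₁.product l₂ ≠ [] := by
  obtain ⟨a, ha⟩ := List.exists_mem_of_ne_nil l₁ h₁
  obtain ⟨b, hb⟩ := List.exists_mem_of_ne_nil l₂ h₂
  intro h
  exact absurd (List.pair_mem_product.2 ⟨ha, hb⟩) (by simp [h])

lemma mem_product' {β γ : Type*} {l₁ : List β} {l₂ : List γ} {p : β × γ} :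
    p ∈ l₁.product l₂ ↔ p.1 ∈ l₁ ∧ p.2 ∈ l₂ := by
  cases p; exact List.pair_mem_product

lemma prodAdd_valid {N : ℕ} {A B : MR Γ N} (hA : MRValid A) (hB : MRValid B) :
    MRValid (prodAdd A B) := by
  constructor
  · simpa [prodAdd] using prod_ne_nil' hA.1 hB.1
  · intro l hl
    obtain ⟨p, hp, rfl⟩ := List.mem_map.1 hl
    obtain ⟨h1, h2⟩ := mem_product'.1 hp
    simpa using prod_ne_nil' (hA.2 _ h1) (hB.2 _ h2)

lemma prodApp_valid {N : ℕ} {A B : MR Γ N} (hA : MRValid A) (hB : MRValid B) :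
    MRValid (prodApp A B) := by
  constructor
  · simpa [prodApp] using prod_ne_nil' hA.1 hB.1
  · intro l hl
    obtain ⟨p, hp, rfl⟩ := List.mem_map.1 hl
    obtain ⟨h1, _⟩ := mem_product'.1 hp
    simp [hA.2 _ h1]

lemma mneg_valid {N : ℕ} {A : MR Γ N} (hA : MRValid A) : MRValid (mneg A) := by
  constructor
  · simpa [mneg] using hA.1
  · intro l hl
    obtain ⟨l', hl', rfl⟩ := List.mem_map.1 hl
    simpa using hA.2 _ hl'

lemma append_valid {N : ℕ} {A B : MR Γ N} (hA : MRValid A) (hB : MRValid B) :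
    MRValid (A ++ B) := by
  refine ⟨by simp [hA.1], ?_⟩
  intro l hl
  rcases List.mem_append.1 hl with h | h
  · exact hA.2 _ h
  · exact hB.2 _ h

lemma evalMM_single {N : ℕ} (A : AffForm Γ N) (z : Fin N → Γ) :
    evalMM [[A]] z = aval A z := by simp [evalMM, lmin, lmax]

lemma evalXM_single {N : ℕ} (A : AffForm Γ N) (z : Fin N → Γ) :
    evalXM [[A]] z = aval A z := by simp [evalXM, lmin, lmax]

lemma evalMM_append {N : ℕ} {A B : MR Γ N} (hA : A ≠ []) (hB : B ≠ []) (z : Fin N → Γ) :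
    evalMM (A ++ B) z = min (evalMM A z) (evalMM B z) := by
  unfold evalMM
  rw [List.map_append, lmin_append (by simpa using hA) (by simpa using hB)]

lemma evalXM_append {N : ℕ} {A B : MR Γ N} (hA : A ≠ []) (hB : B ≠ []) (z : Fin N → Γ) :
    evalXM (A ++ B) z = max (evalXM A z) (evalXM B z) := by
  unfold evalXM
  rw [List.map_append, lmax_append (by simpa using hA) (by simpa using hB)]

lemma evalMM_prodAdd {N : ℕ} {A B : MR Γ N} (hA : MRValid A) (hB : MRValid B) (z : Fin N → Γ) :
    evalMM (prodAdd A B) z = evalMM A z + evalMM B z := by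
  unfold evalMM prodAdd
  rw [List.map_map]
  rw [List.map_congr_left (g := fun p => lmax (p.1.map (fun A => aval A z)) +
      lmax (p.2.map (fun A => aval A z)))
    (fun p hp => by
      obtain ⟨h1, h2⟩ := mem_product'.1 hp
      simp only [Function.comp, List.map_map]
      have : ((fun q : AffForm Γ N × AffForm Γ N => aval (fadd q.1 q.2) z)) =
          fun q => aval q.1 z + aval q.2 z := by
        funext q; exact aval_fadd _ _ _
      rw [show ((fun A => aval A z) ∘ fun q : AffForm Γ N × AffForm Γ N => fadd q.1 q.2) =
          fun q => aval q.1 z + aval q.2 z from funext fun q => aval_fadd _ _ _]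
      exact lmax_prod_add (hA.2 _ h1) (hB.2 _ h2) (fun a : AffForm Γ N => aval a z) (fun a : AffForm Γ N => aval a z))]
  exact lmin_prod_add hA.1 hB.1 (fun l : List (AffForm Γ N) => lmax (l.map (fun A => aval A z))) (fun l : List (AffForm Γ N) => lmax (l.map (fun A => aval A z)))

lemma evalXM_prodAdd {N : ℕ} {A B : MR Γ N} (hA : MRValid A) (hB : MRValid B) (z : Fin N → Γ) :
    evalXM (prodAdd A B) z = evalXM A z + evalXM B z := by
  unfold evalXM prodAdd
  rw [List.map_map]
  rw [List.map_congr_left (g := fun p => lmin (p.1.map (fun A => aval A z)) +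
      lmin (p.2.map (fun A => aval A z)))
    (fun p hp => by
      obtain ⟨h1, h2⟩ := mem_product'.1 hp
      simp only [Function.comp, List.map_map]
      rw [show ((fun A => aval A z) ∘ fun q : AffForm Γ N × AffForm Γ N => fadd q.1 q.2) =
          fun q => aval q.1 z + aval q.2 z from funext fun q => aval_fadd _ _ _]
      exact lmin_prod_add (hA.2 _ h1) (hB.2 _ h2) (fun a : AffForm Γ N => aval a z) (fun a : AffForm Γ N => aval a z))]
  exact lmax_prod_add hA.1 hB.1 (fun l : List (AffForm Γ N) => lmin (l.map (fun A => aval A z))) (fun l : List (AffForm Γ N) => lmin (l.map (fun A => aval A z)))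

lemma evalMM_prodApp {N : ℕ} {A B : MR Γ N} (hA : MRValid A) (hB : MRValid B) (z : Fin N → Γ) :
    evalMM (prodApp A B) z = max (evalMM A z) (evalMM B z) := by
  unfold evalMM prodApp
  rw [List.map_map]
  rw [List.map_congr_left (g := fun p => max (lmax (p.1.map (fun A => aval A z)))
      (lmax (p.2.map (fun A => aval A z))))
    (fun p hp => by
      obtain ⟨h1, h2⟩ := mem_product'.1 hp
      simp only [Function.comp, List.map_append]
      exact lmax_append (by simpa using hA.2 _ h1) (by simpa using hB.2 _ h2))]
  exact lmin_prod_max hA.1 hB.1 (fun l : List (AffForm Γ N) => lmax (l.map (fun A => aval A z))) (fun l : List (AffForm Γ N) => lmax (l.map (fun A => aval A z)))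

lemma evalXM_prodApp {N : ℕ} {A B : MR Γ N} (hA : MRValid A) (hB : MRValid B) (z : Fin N → Γ) :
    evalXM (prodApp A B) z = min (evalXM A z) (evalXM B z) := by
  unfold evalXM prodApp
  rw [List.map_map]
  rw [List.map_congr_left (g := fun p => min (lmin (p.1.map (fun A => aval A z)))
      (lmin (p.2.map (fun A => aval A z))))
    (fun p hp => by
      obtain ⟨h1, h2⟩ := mem_product'.1 hp
      simp only [Function.comp, List.map_append]
      exact lmin_append (by simpa using hA.2 _ h1) (by simpa using hB.2 _ h2))]
  exact lmax_prod_min hA.1 hB.1 (fun l : List (AffForm Γ N) => lmin (l.map (fun A => aval A z))) (fun l : List (AffForm Γ N) => lmin (l.map (fun A => aval A z)))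

lemma evalMM_mneg {N : ℕ} {A : MR Γ N} (hA : MRValid A) (z : Fin N → Γ) :
    evalMM (mneg A) z = -evalXM A z := by
  unfold evalMM evalXM mneg
  rw [List.map_map]
  rw [List.map_congr_left (g := fun l => -lmin (l.map (fun A => aval A z)))
    (fun l hl => by
      simp only [Function.comp, List.map_map]
      rw [show ((fun A => aval A z) ∘ fneg) = fun A : AffForm Γ N => -aval A z from
        funext fun A => aval_fneg _ _]
      exact lmax_map_neg (hA.2 _ hl) _)]
  exact lmin_map_neg hA.1 (fun l : List (AffForm Γ N) => lmin (l.map (fun A => aval A z)))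

lemma evalXM_mneg {N : ℕ} {A : MR Γ N} (hA : MRValid A) (z : Fin N → Γ) :
    evalXM (mneg A) z = -evalMM A z := by
  unfold evalMM evalXM mneg
  rw [List.map_map]
  rw [List.map_congr_left (g := fun l => -lmax (l.map (fun A => aval A z)))
    (fun l hl => by
      simp only [Function.comp, List.map_map]
      rw [show ((fun A => aval A z) ∘ fneg) = fun A : AffForm Γ N => -aval A z from
        funext fun A => aval_fneg _ _]
      exact lmin_map_neg (hA.2 _ hl) _)]
  exact lmax_map_neg hA.1 (fun l : List (AffForm Γ N) => lmax (l.map (fun A => aval A z)))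

def MMTerm.reps {p N : ℕ} (σ : Fin p → AffForm Γ N) : MMTerm Γ p → MR Γ N × MR Γ N
  | .const c => ([[(0, c)]], [[(0, c)]])
  | .var i => ([[σ i]], [[σ i]])
  | .add t s => (prodAdd (t.reps σ).1 (s.reps σ).1, prodAdd (t.reps σ).2 (s.reps σ).2)
  | .neg t => (mneg (t.reps σ).2, mneg (t.reps σ).1)
  | .min t s => ((t.reps σ).1 ++ (s.reps σ).1, prodApp (t.reps σ).2 (s.reps σ).2)
  | .max t s => (prodApp (t.reps σ).1 (s.reps σ).1, (t.reps σ).2 ++ (s.reps σ).2)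

lemma reps_valid {p N : ℕ} (σ : Fin p → AffForm Γ N) (t : MMTerm Γ p) :
    MRValid (t.reps σ).1 ∧ MRValid (t.reps σ).2 := by
  induction t with
  | const c => exact ⟨⟨by simp [MMTerm.reps], by simp [MMTerm.reps]⟩, ⟨by simp [MMTerm.reps], by simp [MMTerm.reps]⟩⟩
  | var i => exact ⟨⟨by simp [MMTerm.reps], by simp [MMTerm.reps]⟩, ⟨by simp [MMTerm.reps], by simp [MMTerm.reps]⟩⟩
  | add t s iht ihs =>
      exact ⟨prodAdd_valid iht.1 ihs.1, prodAdd_valid iht.2 ihs.2⟩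
  | neg t iht => exact ⟨mneg_valid iht.2, mneg_valid iht.1⟩
  | min t s iht ihs =>
      exact ⟨append_valid iht.1 ihs.1, prodApp_valid iht.2 ihs.2⟩
  | max t s iht ihs =>
      exact ⟨prodApp_valid iht.1 ihs.1, append_valid iht.2 ihs.2⟩

lemma reps_correct {p N : ℕ} (σ : Fin p → AffForm Γ N) (t : MMTerm Γ p) (z : Fin N → Γ) :
    evalMM (t.reps σ).1 z = t.eval (fun i => aval (σ i) z) ∧
    evalXM (t.reps σ).2 z = t.eval (fun i => aval (σ i) z) := by
  induction t with
  | const c =>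
      constructor
      · rw [show (MMTerm.const c : MMTerm Γ p).reps σ = ([[(0, c)]], [[(0, c)]]) from rfl]
        simp [evalMM_single, aval, MMTerm.eval]
      · rw [show (MMTerm.const c : MMTerm Γ p).reps σ = ([[(0, c)]], [[(0, c)]]) from rfl]
        simp [evalXM_single, aval, MMTerm.eval]
  | var i =>
      exact ⟨by simp [MMTerm.reps, evalMM_single, MMTerm.eval],
        by simp [MMTerm.reps, evalXM_single, MMTerm.eval]⟩
  | add t s iht ihs =>
      constructor
      · rw [show (MMTerm.add t s).reps σ = (prodAdd (t.reps σ).1 (s.reps σ).1,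
          prodAdd (t.reps σ).2 (s.reps σ).2) from rfl]
        rw [show (MMTerm.add t s).eval = fun x => t.eval x + s.eval x from rfl]
        rw [evalMM_prodAdd (reps_valid σ t).1 (reps_valid σ s).1, iht.1, ihs.1]
      · rw [show (MMTerm.add t s).reps σ = (prodAdd (t.reps σ).1 (s.reps σ).1,
          prodAdd (t.reps σ).2 (s.reps σ).2) from rfl]
        rw [show (MMTerm.add t s).eval = fun x => t.eval x + s.eval x from rfl]
        rw [evalXM_prodAdd (reps_valid σ t).2 (reps_valid σ s).2, iht.2, ihs.2]
  | neg t iht =>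
      constructor
      · rw [show (MMTerm.neg t).reps σ = (mneg (t.reps σ).2, mneg (t.reps σ).1) from rfl]
        rw [show (MMTerm.neg t).eval = fun x => -t.eval x from rfl]
        rw [evalMM_mneg (reps_valid σ t).2, iht.2]
      · rw [show (MMTerm.neg t).reps σ = (mneg (t.reps σ).2, mneg (t.reps σ).1) from rfl]
        rw [show (MMTerm.neg t).eval = fun x => -t.eval x from rfl]
        rw [evalXM_mneg (reps_valid σ t).1, iht.1]
  | min t s iht ihs =>
      constructor
      · rw [show (MMTerm.min t s).reps σ = ((t.reps σ).1 ++ (s.reps σ).1,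
          prodApp (t.reps σ).2 (s.reps σ).2) from rfl]
        rw [show (MMTerm.min t s).eval = fun x => Min.min (t.eval x) (s.eval x) from rfl]
        rw [evalMM_append (reps_valid σ t).1.1 (reps_valid σ s).1.1, iht.1, ihs.1]
      · rw [show (MMTerm.min t s).reps σ = ((t.reps σ).1 ++ (s.reps σ).1,
          prodApp (t.reps σ).2 (s.reps σ).2) from rfl]
        rw [show (MMTerm.min t s).eval = fun x => Min.min (t.eval x) (s.eval x) from rfl]
        rw [evalXM_prodApp (reps_valid σ t).2 (reps_valid σ s).2, iht.2, ihs.2]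
  | max t s iht ihs =>
      constructor
      · rw [show (MMTerm.max t s).reps σ = (prodApp (t.reps σ).1 (s.reps σ).1,
          (t.reps σ).2 ++ (s.reps σ).2) from rfl]
        rw [show (MMTerm.max t s).eval = fun x => Max.max (t.eval x) (s.eval x) from rfl]
        rw [evalMM_prodApp (reps_valid σ t).1 (reps_valid σ s).1, iht.1, ihs.1]
      · rw [show (MMTerm.max t s).reps σ = (prodApp (t.reps σ).1 (s.reps σ).1,
          (t.reps σ).2 ++ (s.reps σ).2) from rfl]
        rw [show (MMTerm.max t s).eval = fun x => Max.max (t.eval x) (s.eval x) from rfl]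
        rw [evalXM_append (reps_valid σ t).2.1 (reps_valid σ s).2.1, iht.2, ihs.2]

end Affine
section FM
variable {Γ : Type*} [AddCommGroup Γ] [LinearOrder Γ] [IsOrderedAddMonoid Γ] [Module ℚ Γ]

abbrev Atom (Γ : Type*) (N : ℕ) := AffForm Γ N × Bool

def Atom.holds {N : ℕ} (a : Atom Γ N) (z : Fin N → Γ) : Prop :=
  if a.2 = true then aval a.1 z < 0 else aval a.1 z ≤ 0

def Clause.holds {N : ℕ} (C : List (Atom Γ N)) (z : Fin N → Γ) : Prop :=
  ∀ a ∈ C, a.holds z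

def DNF.holds {N : ℕ} (D : List (List (Atom Γ N))) (z : Fin N → Γ) : Prop :=
  ∃ C ∈ D, Clause.holds C z

lemma clause_holds_append {N : ℕ} {C₁ C₂ : List (Atom Γ N)} {z : Fin N → Γ} :
    Clause.holds (C₁ ++ C₂) z ↔ Clause.holds C₁ z ∧ Clause.holds C₂ z := by
  unfold Clause.holds; exact List.forall_mem_append

lemma existsBetweenBounds {e : Γ} (he : 0 < e) (lbs ubs : List (Γ × Bool))
    (H : ∀ l ∈ lbs, ∀ u ∈ ubs, if (l.2 || u.2) = true then l.1 < u.1 else l.1 ≤ u.1) :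
    ∃ t : Γ, (∀ l ∈ lbs, if l.2 = true then l.1 < t else l.1 ≤ t) ∧
      (∀ u ∈ ubs, if u.2 = true then t < u.1 else t ≤ u.1) := by
  rcases eq_or_ne lbs [] with rfl | hl
  · rcases eq_or_ne ubs [] with rfl | hu
    · exact ⟨0, by simp, by simp⟩
    · refine ⟨lmin (ubs.map Prod.fst) - e, by simp, ?_⟩
      intro u hu'
      have h1 : lmin (ubs.map Prod.fst) - e < lmin (ubs.map Prod.fst) := sub_lt_self _ he
      have h2 : lmin (ubs.map Prod.fst) ≤ u.1 := lmin_le (List.mem_map_of_mem (f := Prod.fst) hu')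
      have h3 := lt_of_lt_of_le h1 h2
      split
      · exact h3
      · exact h3.le
  · rcases eq_or_ne ubs [] with rfl | hu
    · refine ⟨lmax (lbs.map Prod.fst) + e, ?_, by simp⟩
      intro l hl'
      have h2 : l.1 ≤ lmax (lbs.map Prod.fst) := le_lmax (List.mem_map_of_mem (f := Prod.fst) hl')
      have h3 := lt_of_le_of_lt h2 (lt_add_of_pos_right _ he)
      split
      · exact h3
      · exact h3.le
    · set L := lmax (lbs.map Prod.fst) with hL
      set U := lmin (ubs.map Prod.fst) with hU
      obtain ⟨l0, hl0, hl0e⟩ := lmax_map_ex hl Prod.fst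
      obtain ⟨u0, hu0, hu0e⟩ := lmin_map_ex hu Prod.fst
      have hLU : L ≤ U := by
        have h := H l0 hl0 u0 hu0
        rw [hL, hU, hl0e, hu0e]
        by_cases hb : (l0.2 || u0.2) = true
        · rw [if_pos hb] at h; exact h.le
        · rw [if_neg hb] at h; exact h
      rcases lt_or_eq_of_le hLU with hLt | hEq
      · obtain ⟨h1, h2⟩ := midpoint_between hLt
        refine ⟨(1/2 : ℚ) • (L + U), ?_, ?_⟩
        · intro l hml
          have h3 : l.1 ≤ L := le_lmax (List.mem_map_of_mem (f := Prod.fst) hml)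
          have h4 := lt_of_le_of_lt h3 h1
          split
          · exact h4
          · exact h4.le
        · intro u hmu
          have h3 : U ≤ u.1 := lmin_le (List.mem_map_of_mem (f := Prod.fst) hmu)
          have h4 := lt_of_lt_of_le h2 h3
          split
          · exact h4
          · exact h4.le
      · refine ⟨L, ?_, ?_⟩
        · intro l hml
          have h3 : l.1 ≤ L := le_lmax (List.mem_map_of_mem (f := Prod.fst) hml)
          by_cases hb : l.2 = true
          · rw [if_pos hb]
            have h := H l hml u0 hu0
            rw [if_pos (by simp [hb])] at h
            rw [hEq, hU, hu0e]
            exact h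
          · rw [if_neg hb]; exact h3
        · intro u hmu
          have h3 : U ≤ u.1 := lmin_le (List.mem_map_of_mem (f := Prod.fst) hmu)
          by_cases hb : u.2 = true
          · rw [if_pos hb]
            have h := H l0 hl0 u hmu
            rw [if_pos (by simp [hb])] at h
            rw [hL, hl0e]
            exact h
          · rw [if_neg hb]; rw [hEq]; exact h3

def atomLast {N : ℕ} (a : Atom Γ (N+1)) : ℚ := a.1.1 (Fin.last N)

def restrictAtom {N : ℕ} (a : Atom Γ (N+1)) : Atom Γ N := ((Fin.init a.1.1, a.1.2), a.2)

def resolveAtom {N : ℕ} (P Q : Atom Γ (N+1)) : Atom Γ N :=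
  ((fun j => (-(atomLast Q)) * P.1.1 j.castSucc + (atomLast P) * Q.1.1 j.castSucc,
    (-(atomLast Q)) • P.1.2 + (atomLast P) • Q.1.2), P.2 || Q.2)

def elim1 {N : ℕ} (C : List (Atom Γ (N+1))) : List (Atom Γ N) :=
  (C.filter fun a => decide (atomLast a = 0)).map restrictAtom ++
  ((C.filter fun a => decide (0 < atomLast a)).product
    (C.filter fun a => decide (atomLast a < 0))).map fun p => resolveAtom p.1 p.2

lemma aval_snoc {N : ℕ} (A : AffForm Γ (N+1)) (y : Fin N → Γ) (t : Γ) :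
    aval A (Fin.snoc y t) = A.1 (Fin.last N) • t + aval (Fin.init A.1, A.2) y := by
  unfold aval
  rw [Fin.sum_univ_castSucc]
  simp only [Fin.snoc_castSucc, Fin.snoc_last, Fin.init]
  abel

lemma resolve_aval {N : ℕ} (P Q : Atom Γ (N+1)) (y : Fin N → Γ) (t : Γ) :
    aval (resolveAtom P Q).1 y =
      (-(atomLast Q)) • aval P.1 (Fin.snoc y t) + (atomLast P) • aval Q.1 (Fin.snoc y t) := by
  rw [aval_snoc, aval_snoc]
  unfold aval resolveAtom atomLast
  simp only [smul_add, add_smul, mul_smul, Finset.sum_add_distrib, Finset.smul_sum, Fin.init]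
  rw [smul_comm (-(Q.1.1 (Fin.last N))) (P.1.1 (Fin.last N)) t,
    smul_comm (P.1.1 (Fin.last N)) (Q.1.1 (Fin.last N)) t]
  module

private lemma add_lt_zero_iff' {a b : Γ} : a + b < 0 ↔ b < -a := by
  constructor <;> intro h
  · have := add_lt_add_left h (-a); simpa using this
  · have := add_lt_add_right h a; simpa using this

private lemma add_le_zero_iff' {a b : Γ} : a + b ≤ 0 ↔ b ≤ -a := by
  constructor <;> intro h
  · have := add_le_add_left h (-a); simpa using this
  · have := add_le_add_right h a; simpa using this

lemma combo_lt {p n : ℚ} (hp : 0 < p) (hn : n < 0) (rP rQ : Γ) :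
    (-n) • rP + p • rQ < 0 ↔ (-(1/n)) • rQ < (-(1/p)) • rP := by
  have hn' : n ≠ 0 := ne_of_lt hn
  have hp' : p ≠ 0 := ne_of_gt hp
  have hc : 0 < (-n) * p := mul_pos (neg_pos.2 hn) hp
  rw [← qsmul_lt_iff_pos hc (a := (-(1/n)) • rQ) (b := (-(1/p)) • rP)]
  rw [smul_smul, smul_smul,
    show (-n) * p * (-(1/n)) = p by field_simp; try ring,
    show (-n) * p * (-(1/p)) = n by field_simp; try ring]
  rw [add_lt_zero_iff', neg_smul, neg_neg]

lemma combo_le {p n : ℚ} (hp : 0 < p) (hn : n < 0) (rP rQ : Γ) :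
    (-n) • rP + p • rQ ≤ 0 ↔ (-(1/n)) • rQ ≤ (-(1/p)) • rP := by
  have hn' : n ≠ 0 := ne_of_lt hn
  have hp' : p ≠ 0 := ne_of_gt hp
  have hc : 0 < (-n) * p := mul_pos (neg_pos.2 hn) hp
  rw [← qsmul_le_iff_pos hc (a := (-(1/n)) • rQ) (b := (-(1/p)) • rP)]
  rw [smul_smul, smul_smul,
    show (-n) * p * (-(1/n)) = p by field_simp; try ring,
    show (-n) * p * (-(1/p)) = n by field_simp; try ring]
  rw [add_le_zero_iff', neg_smul, neg_neg]

end FM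
section FM2
variable {Γ : Type*} [AddCommGroup Γ] [LinearOrder Γ] [IsOrderedAddMonoid Γ] [Module ℚ Γ]

private lemma smul_nonpos_of {q : ℚ} (hq : 0 < q) {a : Γ} (h : a ≤ 0) : q • a ≤ 0 := by
  have := (qsmul_le_iff_pos hq (a := a) (b := 0)).2 h
  rwa [smul_zero] at this

private lemma smul_neg_of {q : ℚ} (hq : 0 < q) {a : Γ} (h : a < 0) : q • a < 0 := by
  have := (qsmul_lt_iff_pos hq (a := a) (b := 0)).2 h
  rwa [smul_zero] at this

lemma resolve_aval' {N : ℕ} (P Q : Atom Γ (N+1)) (y : Fin N → Γ) :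
    aval (resolveAtom P Q).1 y =
      (-(atomLast Q)) • aval (restrictAtom P).1 y + (atomLast P) • aval (restrictAtom Q).1 y := by
  have h := resolve_aval P Q y 0
  simp only [aval_snoc, smul_zero, zero_add] at h
  exact h

lemma elim1_sound {N : ℕ} {C : List (Atom Γ (N+1))} {y : Fin N → Γ} {t : Γ}
    (h : Clause.holds C (Fin.snoc y t)) : Clause.holds (elim1 C) y := by
  intro a ha
  rcases List.mem_append.1 ha with ha | ha
  · obtain ⟨b, hb, rfl⟩ := List.mem_map.1 ha
    rw [List.mem_filter] at hb
    obtain ⟨hbC, hb0⟩ := hb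
    have hb0' : atomLast b = 0 := by simpa using hb0
    have hh := h b hbC
    unfold Atom.holds at hh ⊢
    rw [aval_snoc, show b.1.1 (Fin.last N) = atomLast b from rfl, hb0', zero_smul, zero_add] at hh
    exact hh
  · obtain ⟨⟨P, Q⟩, hPQ, rfl⟩ := List.mem_map.1 ha
    obtain ⟨hP, hQ⟩ := mem_product'.1 hPQ
    rw [List.mem_filter] at hP hQ
    have hp : 0 < atomLast P := by simpa using hP.2
    have hq : atomLast Q < 0 := by simpa using hQ.2
    have h1 := h P hP.1
    have h2 := h Q hQ.1
    unfold Atom.holds at h1 h2 ⊢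
    rw [resolve_aval P Q y t]
    rw [show (resolveAtom P Q).2 = (P.2 || Q.2) from rfl]
    cases hb1 : P.2 <;> cases hb2 : Q.2 <;>
      rw [hb1] at h1 <;> rw [hb2] at h2 <;> simp only [if_true, if_false,
        Bool.false_or, Bool.true_or, Bool.or_false, Bool.or_true,
        if_pos rfl, Bool.false_eq_true, if_neg Bool.false_ne_true] at h1 h2 ⊢
    · exact add_nonpos (smul_nonpos_of (neg_pos.2 hq) h1) (smul_nonpos_of hp h2)
    · exact add_lt_of_nonpos_of_lt (smul_nonpos_of (neg_pos.2 hq) h1) (smul_neg_of hp h2)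
    · exact add_lt_of_lt_of_nonpos (smul_neg_of (neg_pos.2 hq) h1) (smul_nonpos_of hp h2)
    · exact add_neg (smul_neg_of (neg_pos.2 hq) h1) (smul_neg_of hp h2)

lemma elim1_complete {N : ℕ} {e : Γ} (he : 0 < e) {C : List (Atom Γ (N+1))} {y : Fin N → Γ}
    (h : Clause.holds (elim1 C) y) : ∃ t, Clause.holds C (Fin.snoc y t) := by
  classical
  set lbs := (C.filter fun a => decide (atomLast a < 0)).map
    (fun a => ((-(1/atomLast a)) • aval (restrictAtom a).1 y, a.2)) with hlbs
  set ubs := (C.filter fun a => decide (0 < atomLast a)).map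
    (fun a => ((-(1/atomLast a)) • aval (restrictAtom a).1 y, a.2)) with hubs
  have H : ∀ l ∈ lbs, ∀ u ∈ ubs, if (l.2 || u.2) = true then l.1 < u.1 else l.1 ≤ u.1 := by
    intro l hml u hmu
    rw [hlbs] at hml
    rw [hubs] at hmu
    obtain ⟨Qa, hQm, rfl⟩ := List.mem_map.1 hml
    obtain ⟨Pa, hPm, rfl⟩ := List.mem_map.1 hmu
    rw [List.mem_filter] at hQm hPm
    have hq : atomLast Qa < 0 := by simpa using hQm.2
    have hp : 0 < atomLast Pa := by simpa using hPm.2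
    have hres : (resolveAtom Pa Qa) ∈ elim1 C := by
      apply List.mem_append.2
      right
      exact List.mem_map.2 ⟨(Pa, Qa), mem_product'.2 ⟨List.mem_filter.2 ⟨hPm.1, by simpa using hp⟩,
        List.mem_filter.2 ⟨hQm.1, by simpa using hq⟩⟩, rfl⟩
    have hh := h _ hres
    unfold Atom.holds at hh
    rw [resolve_aval' Pa Qa y, show (resolveAtom Pa Qa).2 = (Pa.2 || Qa.2) from rfl] at hh
    simp only
    rw [Bool.or_comm]
    by_cases hb : (Pa.2 || Qa.2) = true
    · rw [if_pos hb] at hh ⊢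
      exact (combo_lt hp hq _ _).1 hh
    · rw [if_neg hb] at hh ⊢
      exact (combo_le hp hq _ _).1 hh
  obtain ⟨t, hts, htu⟩ := existsBetweenBounds he lbs ubs H
  refine ⟨t, ?_⟩
  intro a haC
  rcases lt_trichotomy (atomLast a) 0 with hq | hq | hq
  · have hmem : ((-(1/atomLast a)) • aval (restrictAtom a).1 y, a.2) ∈ lbs := by
      rw [hlbs]
      exact List.mem_map.2 ⟨a, List.mem_filter.2 ⟨haC, by simpa using hq⟩, rfl⟩
    have hb := hts _ hmem
    unfold Atom.holds
    rw [aval_snoc, show a.1.1 (Fin.last N) = atomLast a from rfl]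
    by_cases hsb : a.2 = true
    · rw [if_pos hsb]
      rw [if_pos hsb] at hb
      exact (neg_lt_iff' hq t _).2 hb
    · rw [if_neg hsb]
      rw [if_neg hsb] at hb
      exact (neg_le_iff' hq t _).2 hb
  · have hres : restrictAtom a ∈ elim1 C := by
      apply List.mem_append.2
      left
      exact List.mem_map.2 ⟨a, List.mem_filter.2 ⟨haC, by simpa using hq⟩, rfl⟩
    have hh := h _ hres
    unfold Atom.holds at hh ⊢
    rw [aval_snoc, show a.1.1 (Fin.last N) = atomLast a from rfl, hq, zero_smul, zero_add]
    exact hh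
  · have hmem : ((-(1/atomLast a)) • aval (restrictAtom a).1 y, a.2) ∈ ubs := by
      rw [hubs]
      exact List.mem_map.2 ⟨a, List.mem_filter.2 ⟨haC, by simpa using hq⟩, rfl⟩
    have hb := htu _ hmem
    unfold Atom.holds
    rw [aval_snoc, show a.1.1 (Fin.last N) = atomLast a from rfl]
    by_cases hsb : a.2 = true
    · rw [if_pos hsb]
      rw [if_pos hsb] at hb
      exact (pos_lt_iff hq t _).2 hb
    · rw [if_neg hsb]
      rw [if_neg hsb] at hb
      exact (pos_le_iff hq t _).2 hb

def elimRec : {k : ℕ} → List (Atom Γ (k+1)) → List (Atom Γ 1)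
  | 0, C => C
  | _+1, C => elimRec (elim1 C)

lemma elimRec_correct {e : Γ} (he : 0 < e) :
    ∀ {k : ℕ} (C : List (Atom Γ (k+1))) (ν : Γ),
    (∃ x : Fin k → Γ, Clause.holds C (Fin.cons ν x)) ↔ Clause.holds (elimRec C) ![ν] := by
  intro k
  induction k with
  | zero =>
      intro C ν
      constructor
      · rintro ⟨x, hx⟩
        have hc : Fin.cons ν x = ![ν] := by
          funext i
          refine Fin.cases ?_ (fun j => Fin.elim0 j) i
          rfl
        rw [show (elimRec C : List (Atom Γ 1)) = C from rfl, ← hc]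
        exact hx
      · intro hx
        refine ⟨fun j => Fin.elim0 j, ?_⟩
        have hc : Fin.cons ν (fun j : Fin 0 => Fin.elim0 j : Fin 0 → Γ) = ![ν] := by
          funext i
          refine Fin.cases ?_ (fun j => Fin.elim0 j) i
          rfl
        rw [hc]
        exact hx
  | succ k ih =>
      intro C ν
      constructor
      · rintro ⟨x, hx⟩
        rw [show (elimRec C : List (Atom Γ 1)) = elimRec (elim1 C) from rfl]
        apply (ih (elim1 C) ν).1
        refine ⟨Fin.init x, ?_⟩
        apply elim1_sound (t := x (Fin.last k))
        rw [← Fin.cons_snoc_eq_snoc_cons, Fin.snoc_init_self]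
        exact hx
      · intro hx
        rw [show (elimRec C : List (Atom Γ 1)) = elimRec (elim1 C) from rfl] at hx
        obtain ⟨x', hx'⟩ := (ih (elim1 C) ν).2 hx
        obtain ⟨t, ht⟩ := elim1_complete he hx'
        refine ⟨Fin.snoc x' t, ?_⟩
        rw [Fin.cons_snoc_eq_snoc_cons]
        exact ht

def AtomsIn (M : AddSubgroup Γ) {N : ℕ} (C : List (Atom Γ N)) : Prop :=
  ∀ a ∈ C, a.1.2 ∈ M

lemma elim1_atomsIn {M : AddSubgroup Γ} (hMdiv : ∀ (q : ℚ), ∀ a ∈ M, q • a ∈ M) {N : ℕ}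
    {C : List (Atom Γ (N+1))} (h : AtomsIn M C) : AtomsIn M (elim1 C) := by
  intro a ha
  rcases List.mem_append.1 ha with ha | ha
  · obtain ⟨b, hb, rfl⟩ := List.mem_map.1 ha
    exact h b (List.mem_filter.1 hb).1
  · obtain ⟨⟨P, Q⟩, hPQ, rfl⟩ := List.mem_map.1 ha
    obtain ⟨hP, hQ⟩ := mem_product'.1 hPQ
    exact AddSubgroup.add_mem M (hMdiv _ _ (h P (List.mem_filter.1 hP).1))
      (hMdiv _ _ (h Q (List.mem_filter.1 hQ).1))

lemma elimRec_atomsIn {M : AddSubgroup Γ} (hMdiv : ∀ (q : ℚ), ∀ a ∈ M, q • a ∈ M) :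
    ∀ {k : ℕ} {C : List (Atom Γ (k+1))}, AtomsIn M C → AtomsIn M (elimRec C) := by
  intro k
  induction k with
  | zero => intro C h; exact h
  | succ k ih => intro C h; exact ih (elim1_atomsIn hMdiv h)

end FM2
section Encode
variable {Γ : Type*} [AddCommGroup Γ] [LinearOrder Γ] [IsOrderedAddMonoid Γ] [Module ℚ Γ]

lemma lt_lmin_iff {α : Type*} [LinearOrder α] [Zero α] {l : List α} (h : l ≠ []) {c : α} :
    c < lmin l ↔ ∀ a ∈ l, c < a :=
  ⟨fun H a ha => lt_of_lt_of_le H (lmin_le ha), fun H => H _ (lmin_mem h)⟩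

def sigma1 (Γ : Type*) [AddCommGroup Γ] [LinearOrder Γ] [IsOrderedAddMonoid Γ] [Module ℚ Γ] (n : ℕ) :
    Fin n → AffForm Γ (n+1) :=
  fun i => (Fin.cons 0 (Pi.single i 1), 0)

def sigma2 (n : ℕ) (k : ℤ) (β : Γ) : Fin (n+1) → AffForm Γ (n+1) := fun i =>
  if h : i = Fin.last n then (Fin.cons (k:ℚ) (0 : Fin n → ℚ), β)
  else (Fin.cons 0 (Pi.single (i.castPred h) 1), 0)

lemma aval_nu {n : ℕ} (k : ℤ) (β : Γ) (ν : Γ) (x : Fin n → Γ) :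
    aval ((Fin.cons (k:ℚ) (0 : Fin n → ℚ)), β) (Fin.cons ν x) = (k:ℚ) • ν + β := by
  unfold aval
  rw [Fin.sum_univ_succ]
  simp

lemma aval_var {n : ℕ} (i : Fin n) (ν : Γ) (x : Fin n → Γ) :
    aval (Fin.cons (0:ℚ) (Pi.single i (1:ℚ)), (0:Γ)) (Fin.cons ν x) = x i := by
  unfold aval
  rw [Fin.sum_univ_succ]
  simp [Pi.single_apply, ite_smul, Finset.sum_ite_eq']

lemma sigma1_eval {n : ℕ} (ν : Γ) (x : Fin n → Γ) :
    (fun i => aval (sigma1 Γ n i) (Fin.cons ν x)) = x := by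
  funext i
  exact aval_var i ν x

lemma sigma2_eval {n : ℕ} (k : ℤ) (β : Γ) (ν : Γ) (x : Fin n → Γ) :
    (fun i => aval (sigma2 n k β i) (Fin.cons ν x)) = Fin.snoc x ((k:ℚ) • ν + β) := by
  funext i
  by_cases h : i = Fin.last n
  · subst h
    rw [show sigma2 n k β (Fin.last n) = (Fin.cons (k:ℚ) (0 : Fin n → ℚ), β) from dif_pos rfl,
      Fin.snoc_last]
    exact aval_nu k β ν x
  · rw [show sigma2 n k β i = (Fin.cons 0 (Pi.single (i.castPred h) 1), 0) from dif_neg h]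
    conv_rhs => rw [show i = (i.castPred h).castSucc from (Fin.castSucc_castPred i h).symm]
    rw [Fin.snoc_castSucc]
    exact aval_var _ ν x

noncomputable def cellClause {n : ℕ} (s : Finset ((Fin n → ℚ) × Γ × Bool)) : List (Atom Γ (n+1)) :=
  s.toList.map (fun p => ((Fin.cons 0 p.1, -p.2.1), p.2.2))

lemma cellClause_holds {n : ℕ} (s : Finset ((Fin n → ℚ) × Γ × Bool)) (ν : Γ) (x : Fin n → Γ) :
    Clause.holds (cellClause s) (Fin.cons ν x) ↔ x ∈ cellSet (id : Γ → Γ) s := by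
  unfold Clause.holds cellClause cellSet
  rw [Set.mem_setOf_eq]
  constructor
  · intro h p hp
    have hh := h _ (List.mem_map.2 ⟨p, Finset.mem_toList.2 hp, rfl⟩)
    unfold Atom.holds at hh
    try simp only at hh
    rw [show aval (Fin.cons 0 p.1, -p.2.1) (Fin.cons ν x) =
        (∑ j, p.1 j • x j) + (-p.2.1) by
      unfold aval; rw [Fin.sum_univ_succ]; simp] at hh
    rw [← sub_eq_add_neg] at hh
    simp only [id_eq]
    split at hh
    · rename_i hb; rw [if_pos hb, ← sub_neg]; exact hh
    · rename_i hb; rw [if_neg hb, ← sub_nonpos]; exact hh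
  · intro h a ha
    obtain ⟨p, hp, rfl⟩ := List.mem_map.1 ha
    have hh := h p (Finset.mem_toList.1 hp)
    unfold Atom.holds
    try simp only
    rw [show aval (Fin.cons 0 p.1, -p.2.1) (Fin.cons ν x) =
        (∑ j, p.1 j • x j) + (-p.2.1) by
      unfold aval; rw [Fin.sum_univ_succ]; simp]
    rw [← sub_eq_add_neg]
    simp only [id_eq] at hh
    split at hh
    · rename_i hb; rw [if_pos hb, sub_neg]; exact hh
    · rename_i hb; rw [if_neg hb, sub_nonpos]; exact hh

def boxClause (n : ℕ) (m : ℕ) : List (Atom Γ (n+1)) :=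
  ((List.finRange n).map fun j =>
    (((Fin.cons (-(m:ℚ)) (Pi.single j (1:ℚ)), (0:Γ)) : AffForm Γ (n+1)), false)) ++
  ((List.finRange n).map fun j =>
    (((Fin.cons (-(m:ℚ)) (Pi.single j (-1:ℚ)), (0:Γ)) : AffForm Γ (n+1)), false))

lemma boxClause_holds {n : ℕ} (m : ℕ) (ν : Γ) (x : Fin n → Γ) :
    Clause.holds (boxClause (Γ := Γ) n m) (Fin.cons ν x) ↔ ∀ j, |x j| ≤ (m:ℚ) • ν := by
  unfold boxClause
  rw [clause_holds_append]
  have e1 : ∀ j : Fin n, aval (Fin.cons (-(m:ℚ)) (Pi.single j (1:ℚ)), (0:Γ)) (Fin.cons ν x) =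
      -((m:ℚ) • ν) + x j := by
    intro j
    unfold aval
    rw [Fin.sum_univ_succ]
    simp [Pi.single_apply, ite_smul, Finset.sum_ite_eq', neg_smul]
  have e2 : ∀ j : Fin n, aval (Fin.cons (-(m:ℚ)) (Pi.single j (-1:ℚ)), (0:Γ)) (Fin.cons ν x) =
      -((m:ℚ) • ν) + -(x j) := by
    intro j
    unfold aval
    rw [Fin.sum_univ_succ]
    simp [Pi.single_apply, ite_smul, Finset.sum_ite_eq', neg_smul]
  constructor
  · rintro ⟨h1, h2⟩ j
    have hh1 := h1 _ (List.mem_map.2 ⟨j, List.mem_finRange j, rfl⟩)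
    have hh2 := h2 _ (List.mem_map.2 ⟨j, List.mem_finRange j, rfl⟩)
    unfold Atom.holds at hh1 hh2
    rw [if_neg Bool.false_ne_true] at hh1 hh2
    try simp only at hh1 hh2
    rw [e1 j] at hh1
    rw [e2 j] at hh2
    rw [abs_le]
    constructor
    · have h3 := add_le_zero_iff'.1 hh2
      rw [neg_neg] at h3
      exact neg_le.1 h3
    · have h3 := add_le_zero_iff'.1 hh1
      rwa [neg_neg] at h3
  · intro h
    constructor
    · intro a ha
      obtain ⟨j, _, rfl⟩ := List.mem_map.1 ha
      unfold Atom.holds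
      rw [if_neg Bool.false_ne_true]
      try simp only
      rw [e1 j]
      apply add_le_zero_iff'.2
      rw [neg_neg]
      exact (abs_le.1 (h j)).2
    · intro a ha
      obtain ⟨j, _, rfl⟩ := List.mem_map.1 ha
      unfold Atom.holds
      rw [if_neg Bool.false_ne_true]
      try simp only
      rw [e2 j]
      apply add_le_zero_iff'.2
      rw [neg_neg]
      exact neg_le.1 (abs_le.1 (h j)).1

def ltClauses {N : ℕ} (A B : MR Γ N) : List (List (Atom Γ N)) :=
  (A.product B).map fun p => (p.1.product p.2).map fun q => ((fadd q.1 (fneg q.2)), true)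

lemma ltClauses_holds {N : ℕ} {A B : MR Γ N} (hA : MRValid A) (hB : MRValid B) (z : Fin N → Γ) :
    DNF.holds (ltClauses A B) z ↔ evalMM A z < evalXM B z := by
  constructor
  · rintro ⟨C, hC, hall⟩
    obtain ⟨⟨l1, l2⟩, hl, rfl⟩ := List.mem_map.1 hC
    obtain ⟨h1, h2⟩ := mem_product'.1 hl
    have key : lmax (l1.map fun a => aval a z) < lmin (l2.map fun a => aval a z) := by
      rw [lmax_lt_iff (by simpa using hA.2 _ h1)]
      intro v hv
      obtain ⟨a, haa, rfl⟩ := List.mem_map.1 hv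
      rw [lt_lmin_iff (by simpa using hB.2 _ h2)]
      intro w hw
      obtain ⟨b, hbb, rfl⟩ := List.mem_map.1 hw
      have hh := hall _ (List.mem_map.2 ⟨(a, b), mem_product'.2 ⟨haa, hbb⟩, rfl⟩)
      unfold Atom.holds at hh
      rw [if_pos rfl] at hh
      try simp only at hh
      rw [aval_fadd, aval_fneg, ← sub_eq_add_neg, sub_neg] at hh
      exact hh
    calc evalMM A z ≤ lmax (l1.map fun a => aval a z) :=
          lmin_le (List.mem_map.2 ⟨l1, h1, rfl⟩)
      _ < lmin (l2.map fun a => aval a z) := key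
      _ ≤ evalXM B z := le_lmax (List.mem_map.2 ⟨l2, h2, rfl⟩)
  · intro h
    unfold evalMM at h
    rw [lmin_lt_iff (by simpa using hA.1)] at h
    obtain ⟨v, hv, hlt⟩ := h
    obtain ⟨l1, h1, rfl⟩ := List.mem_map.1 hv
    unfold evalXM at hlt
    rw [lt_lmax_iff (by simpa using hB.1)] at hlt
    obtain ⟨w, hw, hlt2⟩ := hlt
    obtain ⟨l2, h2, rfl⟩ := List.mem_map.1 hw
    refine ⟨_, List.mem_map.2 ⟨(l1, l2), mem_product'.2 ⟨h1, h2⟩, rfl⟩, ?_⟩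
    intro a ha
    obtain ⟨⟨a1, b1⟩, hab, rfl⟩ := List.mem_map.1 ha
    obtain ⟨ha1, hb1⟩ := mem_product'.1 hab
    unfold Atom.holds
    rw [if_pos rfl]
    try simp only
    rw [aval_fadd, aval_fneg, ← sub_eq_add_neg, sub_neg]
    calc aval a1 z ≤ lmax (l1.map fun a => aval a z) := le_lmax (List.mem_map.2 ⟨a1, ha1, rfl⟩)
      _ < lmin (l2.map fun a => aval a z) := hlt2
      _ ≤ aval b1 z := lmin_le (List.mem_map.2 ⟨b1, hb1, rfl⟩)

end Encode
section Main
variable {Γ : Type*} [AddCommGroup Γ] [LinearOrder Γ] [IsOrderedAddMonoid Γ] [Module ℚ Γ]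

def MRIn (M : AddSubgroup Γ) {N : ℕ} (R : MR Γ N) : Prop :=
  ∀ l ∈ R, ∀ A ∈ l, A.2 ∈ M

lemma MRIn_prodAdd {M : AddSubgroup Γ} {N : ℕ} {A B : MR Γ N} (h1 : MRIn M A)
    (h2 : MRIn M B) : MRIn M (prodAdd A B) := by
  intro l hl a ha
  obtain ⟨p, hp, rfl⟩ := List.mem_map.1 hl
  obtain ⟨hp1, hp2⟩ := mem_product'.1 hp
  obtain ⟨q, hq, rfl⟩ := List.mem_map.1 ha
  obtain ⟨hq1, hq2⟩ := mem_product'.1 hq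
  exact M.add_mem (h1 _ hp1 _ hq1) (h2 _ hp2 _ hq2)

lemma MRIn_prodApp {M : AddSubgroup Γ} {N : ℕ} {A B : MR Γ N} (h1 : MRIn M A)
    (h2 : MRIn M B) : MRIn M (prodApp A B) := by
  intro l hl a ha
  obtain ⟨p, hp, rfl⟩ := List.mem_map.1 hl
  obtain ⟨hp1, hp2⟩ := mem_product'.1 hp
  rcases List.mem_append.1 ha with h | h
  · exact h1 _ hp1 _ h
  · exact h2 _ hp2 _ h

lemma MRIn_append {M : AddSubgroup Γ} {N : ℕ} {A B : MR Γ N} (h1 : MRIn M A)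
    (h2 : MRIn M B) : MRIn M (A ++ B) := by
  intro l hl a ha
  rcases List.mem_append.1 hl with h | h
  · exact h1 _ h _ ha
  · exact h2 _ h _ ha

lemma MRIn_mneg {M : AddSubgroup Γ} {N : ℕ} {A : MR Γ N} (h1 : MRIn M A) :
    MRIn M (mneg A) := by
  intro l hl a ha
  obtain ⟨l', hl', rfl⟩ := List.mem_map.1 hl
  obtain ⟨a', ha', rfl⟩ := List.mem_map.1 ha
  exact M.neg_mem (h1 _ hl' _ ha')

lemma reps_MRIn {M : AddSubgroup Γ} {p N : ℕ} {σ : Fin p → AffForm Γ N}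
    (hσ : ∀ i, (σ i).2 ∈ M) {t : MMTerm Γ p} (ht : t.ConstsIn (M : Set Γ)) :
    MRIn M (t.reps σ).1 ∧ MRIn M (t.reps σ).2 := by
  induction t with
  | const c =>
      refine ⟨?_, ?_⟩ <;>
        · intro l hl a ha
          simp only [MMTerm.reps, List.mem_singleton] at hl
          subst hl
          simp only [List.mem_singleton] at ha
          subst ha
          exact ht
  | var i =>
      refine ⟨?_, ?_⟩ <;>
        · intro l hl a ha
          simp only [MMTerm.reps, List.mem_singleton] at hl
          subst hl
          simp only [List.mem_singleton] at ha
          subst ha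
          exact hσ i
  | add t s iht ihs =>
      obtain ⟨h1, h2⟩ := iht ht.1
      obtain ⟨h3, h4⟩ := ihs ht.2
      exact ⟨MRIn_prodAdd h1 h3, MRIn_prodAdd h2 h4⟩
  | neg t iht =>
      obtain ⟨h1, h2⟩ := iht ht
      exact ⟨MRIn_mneg h2, MRIn_mneg h1⟩
  | min t s iht ihs =>
      obtain ⟨h1, h2⟩ := iht ht.1
      obtain ⟨h3, h4⟩ := ihs ht.2
      exact ⟨MRIn_append h1 h3, MRIn_prodApp h2 h4⟩
  | max t s iht ihs =>
      obtain ⟨h1, h2⟩ := iht ht.1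
      obtain ⟨h3, h4⟩ := ihs ht.2
      exact ⟨MRIn_prodApp h1 h3, MRIn_append h2 h4⟩

noncomputable def theDNF {n : ℕ} (kc : ℕ) (cells : Fin kc → Finset ((Fin n → ℚ) × Γ × Bool))
    (th : MMTerm Γ n) (t : MMTerm Γ (n+1)) (m : ℕ) (k : ℤ) (β : Γ) :
    List (List (Atom Γ (n+1))) :=
  ((List.finRange kc).product
    (ltClauses (th.reps (sigma1 Γ n)).1 (t.reps (sigma2 n k β)).2 ++
     ltClauses (t.reps (sigma2 n k β)).1 (th.reps (sigma1 Γ n)).2)).map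
    fun p => cellClause (cells p.1) ++ (boxClause n m ++ p.2)

lemma theDNF_holds {n kc : ℕ} (cells : Fin kc → Finset ((Fin n → ℚ) × Γ × Bool))
    (th : MMTerm Γ n) (t : MMTerm Γ (n+1)) (m : ℕ) (k : ℤ) (β : Γ) (ν : Γ) (x : Fin n → Γ) :
    DNF.holds (theDNF kc cells th t m k β) (Fin.cons ν x) ↔
      ((x ∈ ⋃ i, cellSet (id : Γ → Γ) (cells i)) ∧ (∀ j, |x j| ≤ (m:ℚ) • ν) ∧
        th.eval x ≠ t.eval (Fin.snoc x ((k:ℚ) • ν + β))) := by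
  have hv1 := reps_valid (sigma1 Γ n) th
  have hv2 := reps_valid (sigma2 n k β) t
  have hc1 := reps_correct (sigma1 Γ n) th (Fin.cons ν x)
  have hc2 := reps_correct (sigma2 n k β) t (Fin.cons ν x)
  rw [sigma1_eval ν x] at hc1
  rw [sigma2_eval k β ν x] at hc2
  have hne : DNF.holds (ltClauses (th.reps (sigma1 Γ n)).1 (t.reps (sigma2 n k β)).2 ++
      ltClauses (t.reps (sigma2 n k β)).1 (th.reps (sigma1 Γ n)).2) (Fin.cons ν x) ↔
      th.eval x ≠ t.eval (Fin.snoc x ((k:ℚ) • ν + β)) := by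
    unfold DNF.holds
    constructor
    · rintro ⟨C, hC, hh⟩
      rcases List.mem_append.1 hC with h | h
      · have := (ltClauses_holds hv1.1 hv2.2 (Fin.cons ν x)).1 ⟨C, h, hh⟩
        rw [hc1.1, hc2.2] at this
        exact ne_of_lt this
      · have := (ltClauses_holds hv2.1 hv1.2 (Fin.cons ν x)).1 ⟨C, h, hh⟩
        rw [hc2.1, hc1.2] at this
        exact (ne_of_lt this).symm
    · intro hnn
      rcases lt_or_gt_of_ne hnn with h | h
      · obtain ⟨C, hC, hh⟩ := (ltClauses_holds hv1.1 hv2.2 (Fin.cons ν x)).2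
          (by rw [hc1.1, hc2.2]; exact h)
        exact ⟨C, List.mem_append.2 (Or.inl hC), hh⟩
      · obtain ⟨C, hC, hh⟩ := (ltClauses_holds hv2.1 hv1.2 (Fin.cons ν x)).2
          (by rw [hc2.1, hc1.2]; exact h)
        exact ⟨C, List.mem_append.2 (Or.inr hC), hh⟩
  unfold DNF.holds theDNF
  constructor
  · rintro ⟨C, hC, hh⟩
    obtain ⟨⟨i, C2⟩, hp, rfl⟩ := List.mem_map.1 hC
    obtain ⟨_, hC2⟩ := mem_product'.1 hp
    rw [clause_holds_append, clause_holds_append] at hh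
    obtain ⟨h1, h2, h3⟩ := hh
    exact ⟨Set.mem_iUnion.2 ⟨i, (cellClause_holds _ ν x).1 h1⟩,
      (boxClause_holds m ν x).1 h2, hne.1 ⟨C2, hC2, h3⟩⟩
  · rintro ⟨hcell, hbox, hnn⟩
    obtain ⟨i, hi⟩ := Set.mem_iUnion.1 hcell
    obtain ⟨C2, hC2, h3⟩ := hne.2 hnn
    refine ⟨cellClause (cells i) ++ (boxClause n m ++ C2),
      List.mem_map.2 ⟨(i, C2), mem_product'.2 ⟨List.mem_finRange i, hC2⟩, rfl⟩, ?_⟩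
    rw [clause_holds_append, clause_holds_append]
    exact ⟨(cellClause_holds _ ν x).2 hi, (boxClause_holds m ν x).2 hbox, h3⟩

lemma theDNF_atomsIn {M : AddSubgroup Γ} {n kc : ℕ}
    {cells : Fin kc → Finset ((Fin n → ℚ) × Γ × Bool)}
    (hcells : ∀ i, ∀ p ∈ cells i, p.2.1 ∈ M)
    {th : MMTerm Γ n} {t : MMTerm Γ (n+1)} (hth : th.ConstsIn (M : Set Γ))
    (ht : t.ConstsIn (M : Set Γ)) (m : ℕ) (k : ℤ) {β : Γ} (hβ : β ∈ M) :
    ∀ C ∈ theDNF kc cells th t m k β, AtomsIn M C := by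
  have hσ1 : ∀ i, ((sigma1 Γ n) i).2 ∈ M := fun i => M.zero_mem
  have hσ2 : ∀ i, ((sigma2 n k β) i).2 ∈ M := by
    intro i
    unfold sigma2
    split
    · exact hβ
    · exact M.zero_mem
  have hr1 := reps_MRIn hσ1 hth
  have hr2 := reps_MRIn hσ2 ht
  have hlt : ∀ (A B : MR Γ (n+1)), MRIn M A → MRIn M B →
      ∀ C ∈ ltClauses A B, AtomsIn M C := by
    intro A B hA hB C hC a ha
    obtain ⟨p, hp, rfl⟩ := List.mem_map.1 hC
    obtain ⟨h1, h2⟩ := mem_product'.1 hp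
    obtain ⟨q, hq, rfl⟩ := List.mem_map.1 ha
    obtain ⟨hq1, hq2⟩ := mem_product'.1 hq
    exact M.add_mem (hA _ h1 _ hq1) (M.neg_mem (hB _ h2 _ hq2))
  intro C hC
  obtain ⟨⟨i, C2⟩, hp, rfl⟩ := List.mem_map.1 hC
  obtain ⟨_, hC2⟩ := mem_product'.1 hp
  intro a ha
  rcases List.mem_append.1 ha with h | h
  · obtain ⟨p, hpm, rfl⟩ := List.mem_map.1 h
    exact M.neg_mem (hcells i p (Finset.mem_toList.1 hpm))
  · rcases List.mem_append.1 h with h | h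
    · unfold boxClause at h
      rcases List.mem_append.1 h with h | h <;>
        · obtain ⟨j, _, rfl⟩ := List.mem_map.1 h
          exact M.zero_mem
    · rcases List.mem_append.1 hC2 with h2 | h2
      · exact hlt _ _ hr1.1 hr2.2 C2 h2 a h
      · exact hlt _ _ hr2.1 hr1.2 C2 h2 a h

lemma aval_one (A : AffForm Γ 1) (ν : Γ) : aval A ![ν] = A.1 0 • ν + A.2 := by
  unfold aval
  rw [Fin.sum_univ_one]
  simp

lemma clause_threshold {M : AddSubgroup Γ} (hMdiv : ∀ (q : ℚ), ∀ a ∈ M, q • a ∈ M)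
    {Cf : List (Atom Γ 1)} (hconst : AtomsIn M Cf)
    {ν' : Γ} (hbig : ∀ d ∈ M, d < ν') (hfail : ¬ Clause.holds Cf ![ν']) :
    ∃ d ∈ M, ∀ ν : Γ, d < ν → ¬ Clause.holds Cf ![ν] := by
  unfold Clause.holds at hfail
  push_neg at hfail
  obtain ⟨a, haC, hna⟩ := hfail
  have hc : a.1.2 ∈ M := hconst a haC
  rcases lt_trichotomy (a.1.1 0) 0 with hq | hq | hq
  · exfalso
    apply hna
    have hlt : (-(1/(a.1.1 0))) • a.1.2 < ν' := hbig _ (hMdiv _ _ hc)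
    have hval : aval a.1 ![ν'] < 0 := by
      rw [aval_one]
      exact (neg_lt_iff' hq ν' a.1.2).2 hlt
    unfold Atom.holds
    split
    · exact hval
    · exact hval.le
  · refine ⟨0, M.zero_mem, ?_⟩
    intro ν _ hh
    apply hna
    have h2 := hh a haC
    unfold Atom.holds at h2 ⊢
    rw [aval_one, hq, zero_smul] at h2 ⊢
    exact h2
  · refine ⟨(-(1/(a.1.1 0))) • a.1.2, hMdiv _ _ hc, ?_⟩
    intro ν hν hh
    have h2 := hh a haC
    unfold Atom.holds at h2
    have hle : aval a.1 ![ν] ≤ 0 := by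
      split at h2
      · exact h2.le
      · exact h2
    rw [aval_one] at hle
    exact absurd hν (not_lt.2 ((pos_le_iff hq ν a.1.2).1 hle))

lemma list_threshold {M : AddSubgroup Γ} {α : Type*} (D : List α) (P : α → Γ → Prop)
    (h : ∀ C ∈ D, ∃ d ∈ M, ∀ ν : Γ, d < ν → P C ν) :
    ∃ d ∈ M, ∀ ν : Γ, d < ν → ∀ C ∈ D, P C ν := by
  induction D with
  | nil => exact ⟨0, M.zero_mem, fun ν _ C hC => absurd hC (List.not_mem_nil (a := C))⟩
  | cons C D ih =>
      obtain ⟨d1, hd1, h1⟩ := h C (List.mem_cons_self)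
      obtain ⟨d2, hd2, h2⟩ := ih (fun C' hC' => h C' (List.mem_cons_of_mem _ hC'))
      refine ⟨max d1 d2, ?_, ?_⟩
      · rcases le_total d1 d2 with hle | hle
        · rw [max_eq_right hle]; exact hd2
        · rw [max_eq_left hle]; exact hd1
      · intro ν hν C' hC'
        rcases List.mem_cons.1 hC' with rfl | hC'
        · exact h1 ν (lt_of_le_of_lt (le_max_left _ _) hν)
        · exact h2 ν (lt_of_le_of_lt (le_max_right _ _) hν) C' hC'

end Main
/-- Let `Γ` be a divisible ordered abelian group, `M ⊆ Γ` a divisible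
subgroup and `ρ ∈ Γ` with `ρ > M`.  (1) Every `γ` in the subgroup generated by `M`
and the rational multiples of `ρ` can be written `γ = (k/m)·ρ + β` with `m > 0`,
`k ∈ ℤ`, `β ∈ M`.  (2) (Transfer) If an identity `h = t(x_1,…,x_n, k·ν + β)` between
`M`-definable functions (encoded by terms and semilinear sets with constants in `M`)
holds on the box `[−m·ν, m·ν]^n` for `ν = ρ/m`, then there is `ν₀ ∈ M` such that the
identity holds on `[−m·ν, m·ν]^n` for all `ν > ν₀` in `M`. -/
theorem stmt_15 {Γ : Type*} [AddCommGroup Γ] [LinearOrder Γ] [IsOrderedAddMonoid Γ] [Module ℚ Γ]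
    (M : AddSubgroup Γ) (hMdiv : ∀ (q : ℚ), ∀ a ∈ M, q • a ∈ M)
    (ρ : Γ) (hρ : ∀ a ∈ M, a < ρ) :
    (∀ γ ∈ AddSubgroup.closure ((M : Set Γ) ∪ {x | ∃ q : ℚ, x = q • ρ}),
      ∃ (m : ℕ) (k : ℤ) (β : Γ), 0 < m ∧ β ∈ M ∧ γ = ((k : ℚ) / (m : ℚ)) • ρ + β) ∧
    (∀ (n kc : ℕ) (cells : Fin kc → Finset ((Fin n → ℚ) × Γ × Bool)),
      (∀ i, ∀ p ∈ cells i, p.2.1 ∈ M) →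
      ∀ (th : MMTerm Γ n) (t : MMTerm Γ (n + 1)),
      th.ConstsIn (M : Set Γ) → t.ConstsIn (M : Set Γ) →
      ∀ (m : ℕ) (k : ℤ) (β : Γ), 0 < m → β ∈ M →
      (∀ x ∈ ⋃ i, cellSet (id : Γ → Γ) (cells i),
        (∀ j, |x j| ≤ ρ) →
        th.eval x = t.eval (Fin.snoc x (k • (((1 : ℚ) / (m : ℚ)) • ρ) + β))) →
      ∃ ν₀ ∈ M, ∀ ν ∈ M, ν₀ < ν →
        ∀ x ∈ ⋃ i, cellSet (id : Γ → Γ) (cells i),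
          (∀ j, |x j| ≤ m • ν) →
          th.eval x = t.eval (Fin.snoc x (k • ν + β))) := by
  constructor
  · -- Part 1
    intro γ hγ
    let S : AddSubgroup Γ :=
      { carrier := {γ | ∃ q : ℚ, ∃ β ∈ M, γ = q • ρ + β}
        zero_mem' := ⟨0, 0, M.zero_mem, by simp⟩
        add_mem' := by
          rintro a b ⟨q1, β1, hβ1, rfl⟩ ⟨q2, β2, hβ2, rfl⟩
          exact ⟨q1 + q2, β1 + β2, M.add_mem hβ1 hβ2, by rw [add_smul]; abel⟩
        neg_mem' := by
          rintro a ⟨q, β, hβ, rfl⟩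
          exact ⟨-q, -β, M.neg_mem hβ, by rw [neg_smul]; abel⟩ }
    have hle : AddSubgroup.closure ((M : Set Γ) ∪ {x | ∃ q : ℚ, x = q • ρ}) ≤ S := by
      rw [AddSubgroup.closure_le]
      rintro γ' hγ'
      rcases hγ' with h | h
      · exact ⟨0, γ', h, by simp⟩
      · obtain ⟨q, rfl⟩ := h
        exact ⟨q, 0, M.zero_mem, by simp⟩
    obtain ⟨q, β, hβ, rfl⟩ := hle hγ
    refine ⟨q.den, q.num, β, q.den_pos, hβ, ?_⟩
    rw [Rat.num_div_den]
  · -- Part 2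
    intro n kc cells hcells th t hth ht m k β hm hβ H
    have hρpos : 0 < ρ := hρ 0 M.zero_mem
    have hmQ : (0:ℚ) < (m:ℚ) := by exact_mod_cast hm
    set nb : Γ := ((1:ℚ)/(m:ℚ)) • ρ with hnbdef
    have e2 : (m:ℚ) • nb = ρ := by
      rw [hnbdef, smul_smul, mul_one_div, div_self (ne_of_gt hmQ), one_smul]
    have hbig : ∀ d ∈ M, d < nb := by
      intro d hd
      have h1 : (m:ℚ) • d < ρ := hρ _ (hMdiv _ _ hd)
      rw [← e2] at h1
      exact (qsmul_lt_iff_pos hmQ).1 h1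
    have hDin : ∀ C ∈ theDNF kc cells th t m k β, AtomsIn M C :=
      theDNF_atomsIn hcells hth ht m k hβ
    have hfail : ∀ C ∈ theDNF kc cells th t m k β, ¬ Clause.holds (elimRec C) ![nb] := by
      intro C hC hcontra
      obtain ⟨x, hx⟩ := (elimRec_correct hρpos C nb).2 hcontra
      obtain ⟨hcell, hbox, hne⟩ :=
        (theDNF_holds cells th t m k β nb x).1 ⟨C, hC, hx⟩
      apply hne
      have e3 : (k:ℚ) • nb = k • (((1:ℚ)/(m:ℚ)) • ρ) := by
        rw [hnbdef, Int.cast_smul_eq_zsmul]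
      rw [e3]
      exact H x hcell (fun j => by rw [← e2]; exact hbox j)
    obtain ⟨ν₀, hν₀M, hthr⟩ := list_threshold (M := M) (theDNF kc cells th t m k β)
      (fun C ν => ¬ Clause.holds (elimRec C) ![ν])
      (fun C hC => clause_threshold hMdiv (elimRec_atomsIn hMdiv (hDin C hC)) hbig
        (hfail C hC))
    refine ⟨ν₀, hν₀M, ?_⟩
    intro ν hνM hνgt x hxcell hxbox
    by_contra hne
    have hDholds : DNF.holds (theDNF kc cells th t m k β) (Fin.cons ν x) :=
      (theDNF_holds cells th t m k β ν x).2
        ⟨hxcell, fun j => by rw [Nat.cast_smul_eq_nsmul]; exact hxbox j,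
          by rw [Int.cast_smul_eq_zsmul]; exact hne⟩
    obtain ⟨C, hC, hCh⟩ := hDholds
    exact hthr ν hνgt C hC ((elimRec_correct hρpos C ν).1 ⟨x, hCh⟩)
end
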